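/- arXiv:2201.08521 — 6 statements merged into one kernel-verified Lean document; each statement's English description precedes it below -/
import Mathlib

section
/- Let K be a point set of type (a,b,c)_{n-1} in PG(n,q) with a ≡ b ≡ c ≡ θ_{n-1} ≡ α (mod β), where α and β are coprime positive integers. Then k ≡ θ_n (mod β). -/
open Module Set

noncomputable section

variable (F : Type) [Field F]

/-- The point set of `PG(n,q)`: the projectivization of `GF(q)^{n+1}`. -/
abbrev PGPoint (n : ℕ) := Projectivization F (Fin (n + 1) → F)

/-- The set of points of the projective space lying in (the projectivization of)
a linear subspace `W`. A `d`-dimensional projective subspace corresponds to a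
submodule `W` with `finrank F W = d + 1`; hyperplanes correspond to `finrank F W = n`. -/
def projSet (n : ℕ) (W : Submodule F (Fin (n + 1) → F)) : Set (PGPoint F n) :=
  {x | x.submodule ≤ W}

/-- `θ_m = (q^{m+1} - 1)/(q - 1)`, the number of points of `PG(m,q)`. -/
def theta (q m : ℕ) : ℕ := (q ^ (m + 1) - 1) / (q - 1)

/-- `K` is of type `(a,b,c)_{n-1}`: every hyperplane meets `K` in `a`, `b` or `c`
points, and each of the three values is attained by some hyperplane. -/
def IsType3 (n : ℕ) (K : Set (PGPoint F n)) (a b c : ℕ) : Prop :=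
  (∀ W : Submodule F (Fin (n + 1) → F), finrank F W = n →
      (K ∩ projSet F n W).ncard = a ∨ (K ∩ projSet F n W).ncard = b ∨
        (K ∩ projSet F n W).ncard = c) ∧
  (∃ W : Submodule F (Fin (n + 1) → F), finrank F W = n ∧ (K ∩ projSet F n W).ncard = a) ∧
  (∃ W : Submodule F (Fin (n + 1) → F), finrank F W = n ∧ (K ∩ projSet F n W).ncard = b) ∧
  (∃ W : Submodule F (Fin (n + 1) → F), finrank F W = n ∧ (K ∩ projSet F n W).ncard = c)

/-- `tnum K m`: the number of hyperplanes meeting `K` in exactly `m` points. -/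
def tnum (n : ℕ) (K : Set (PGPoint F n)) (m : ℕ) : ℕ :=
  {W : Submodule F (Fin (n + 1) → F) | finrank F W = n ∧ (K ∩ projSet F n W).ncard = m}.ncard

section Counting

variable {𝕂 : Type*} [Field 𝕂] [Fintype 𝕂]
variable {V : Type*} [AddCommGroup V] [Module 𝕂 V] [FiniteDimensional 𝕂 V]

/-- Counting points of projective space inside a subspace. -/
lemma card_projSubtype_mul (U : Submodule 𝕂 V) :
    Nat.card {p : Projectivization 𝕂 V // p.submodule ≤ U} * (Fintype.card 𝕂 - 1)
      = Fintype.card 𝕂 ^ finrank 𝕂 U - 1 := by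
  classical
  have : Finite V := Module.finite_of_finite 𝕂
  haveI : Fintype V := Fintype.ofFinite V
  haveI : Finite (Projectivization 𝕂 V) := Quotient.finite _
  haveI : Fintype (Projectivization 𝕂 V) := Fintype.ofFinite _
  set T := {p : Projectivization 𝕂 V // p.submodule ≤ U}
  set S := {u : U // u ≠ 0}
  have hmemmk : ∀ (u : U) (hu : (u : V) ≠ 0),
      (Projectivization.mk 𝕂 (u : V) hu).submodule ≤ U := by
    intro u hu
    rw [Projectivization.submodule_mk]
    exact (Submodule.span_singleton_le_iff_mem _ _).2 u.2
  set π : S → T := fun u =>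
    ⟨Projectivization.mk 𝕂 (u.1 : V) (by simpa using u.2), hmemmk u.1 _⟩ with hπ
  -- each fiber of π has cardinality (q - 1)
  have hfiber : ∀ p : T, Nat.card {s : S // π s = p} = Fintype.card 𝕂 - 1 := by
    intro p
    have hrepU : p.1.rep ∈ U := by
      have := p.2
      rw [Projectivization.submodule_eq] at this
      exact this (Submodule.mem_span_singleton_self _)
    have hrep0 : p.1.rep ≠ 0 := p.1.rep_nonzero
    have hb : Function.Bijective (fun a : 𝕂ˣ =>
        (⟨⟨⟨(a : 𝕂) • p.1.rep, U.smul_mem _ hrepU⟩,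
          by simp [Submodule.mk_eq_zero, smul_ne_zero, hrep0]⟩,
          by
            apply Subtype.ext
            show Projectivization.mk 𝕂 ((a : 𝕂) • p.1.rep) _ = p.1
            conv_rhs => rw [← p.1.mk_rep]
            exact (Projectivization.mk_eq_mk_iff 𝕂 _ _ _ hrep0).2 ⟨a, rfl⟩⟩ :
          {s : S // π s = p})) := by
      constructor
      · intro a b hab
        have h1 : ((a : 𝕂) • p.1.rep : V) = (b : 𝕂) • p.1.rep :=
          congrArg (fun s : {s : S // π s = p} => ((s.1 : U) : V)) hab
        exact Units.ext (smul_left_injective 𝕂 hrep0 h1)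
      · rintro ⟨⟨⟨v, hvU⟩, hv0⟩, rfl⟩
        have hv0' : v ≠ 0 := by simpa [Submodule.mk_eq_zero] using hv0
        obtain ⟨a, ha⟩ := Projectivization.exists_smul_eq_mk_rep 𝕂 v hv0'
        refine ⟨a⁻¹, ?_⟩
        apply Subtype.ext
        apply Subtype.ext
        apply Subtype.ext
        show ((a⁻¹ : 𝕂ˣ) : 𝕂) • (Projectivization.mk 𝕂 v hv0').rep = v
        rw [← ha, Units.smul_def, smul_smul]
        simp
    have := Nat.card_eq_of_bijective _ hb
    rw [← this, Nat.card_units, Nat.card_eq_fintype_card]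
  have h1 : Nat.card S = Nat.card T * (Fintype.card 𝕂 - 1) := by
    rw [Nat.card_congr (Equiv.sigmaFiberEquiv π).symm]
    haveI : ∀ p : T, Fintype {s : S // π s = p} := fun p => Fintype.ofFinite _
    rw [Nat.card_eq_fintype_card, Fintype.card_sigma]
    rw [Nat.card_eq_fintype_card, Finset.sum_congr rfl
      (fun p _ => by rw [← Nat.card_eq_fintype_card, hfiber p])]
    rw [Finset.sum_const, Finset.card_univ, smul_eq_mul]
  have h2 : Nat.card S = Fintype.card 𝕂 ^ finrank 𝕂 U - 1 := by
    have e : S ≃ {u : U // ¬ (u = 0)} := Equiv.subtypeEquivRight (fun u => Iff.rfl)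
    rw [Nat.card_eq_fintype_card, Fintype.card_congr e, Fintype.card_subtype_compl,
      Fintype.card_subtype_eq, card_eq_pow_finrank (K := 𝕂) (V := U)]
  rw [← h1, h2]

end Counting

section Dual

variable {𝕂 : Type*} [Field 𝕂]
variable {V : Type*} [AddCommGroup V] [Module 𝕂 V] [FiniteDimensional 𝕂 V]

lemma hyp_finrank {n : ℕ} (hV : finrank 𝕂 V = n + 1)
    (p : Projectivization 𝕂 (Module.Dual 𝕂 V)) :
    finrank 𝕂 (LinearMap.ker p.rep) = n := by
  have := Module.Dual.finrank_ker_add_one_of_ne_zero p.rep_nonzero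
  omega

lemma hypBij {n : ℕ} (hV : finrank 𝕂 V = n + 1) :
    Function.Bijective (fun p : Projectivization 𝕂 (Module.Dual 𝕂 V) =>
      (⟨LinearMap.ker p.rep, hyp_finrank hV p⟩ :
        {W : Submodule 𝕂 V // finrank 𝕂 W = n})) := by
  constructor
  · intro p q h
    have hk : LinearMap.ker p.rep = LinearMap.ker q.rep := congrArg Subtype.val h
    have hp0 := p.rep_nonzero
    have hq0 := q.rep_nonzero
    obtain ⟨x, hx⟩ : ∃ x, p.rep x ≠ 0 := by
      by_contra hno
      push_neg at hno
      exact hp0 (by ext v; simpa using hno v)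
    have hgx : q.rep x ≠ 0 := by
      intro h0
      have : x ∈ LinearMap.ker p.rep := by rw [hk]; exact h0
      exact hx this
    have hc : p.rep x * (q.rep x)⁻¹ ≠ 0 := mul_ne_zero hx (inv_ne_zero hgx)
    have hfg : p.rep = (p.rep x * (q.rep x)⁻¹) • q.rep := by
      refine Module.Dual.eq_of_ker_eq_of_apply_eq x ?_ ?_ hx
      · rw [LinearMap.ker_smul _ _ hc, hk]
      · simp only [LinearMap.smul_apply, smul_eq_mul]
        field_simp
    rw [← p.mk_rep, ← q.mk_rep]
    exact (Projectivization.mk_eq_mk_iff 𝕂 _ _ hp0 hq0).2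
      ⟨Units.mk0 _ hc, by rw [Units.smul_def, Units.val_mk0, ← hfg]⟩
  · rintro ⟨W, hW⟩
    have h1 : finrank 𝕂 (V ⧸ W) = 1 := by
      have := Submodule.finrank_quotient_add_finrank W
      omega
    obtain ⟨e⟩ : Nonempty ((V ⧸ W) ≃ₗ[𝕂] 𝕂) :=
      FiniteDimensional.nonempty_linearEquiv_of_finrank_eq (by rw [h1, finrank_self])
    set f : Module.Dual 𝕂 V := e.toLinearMap ∘ₗ W.mkQ with hf
    have hker : LinearMap.ker f = W := by
      rw [hf, LinearMap.ker_comp, LinearEquiv.ker, Submodule.comap_bot, Submodule.ker_mkQ]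
    have hf0 : f ≠ 0 := by
      intro h0
      rw [h0, LinearMap.ker_zero] at hker
      rw [← hker, finrank_top, hV] at hW
      omega
    refine ⟨Projectivization.mk 𝕂 f hf0, ?_⟩
    apply Subtype.ext
    show LinearMap.ker (Projectivization.mk 𝕂 f hf0).rep = W
    obtain ⟨a, ha⟩ := Projectivization.exists_smul_eq_mk_rep 𝕂 f hf0
    rw [← ha, Units.smul_def, LinearMap.ker_smul _ _ (Units.ne_zero a), hker]

end Dual

section Counting2

variable {𝕂 : Type*} [Field 𝕂] [Fintype 𝕂]
variable {V : Type*} [AddCommGroup V] [Module 𝕂 V] [FiniteDimensional 𝕂 V]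

lemma card_hyperplanes {n : ℕ} (hV : finrank 𝕂 V = n + 1) :
    Nat.card {W : Submodule 𝕂 V // finrank 𝕂 W = n} * (Fintype.card 𝕂 - 1)
      = Fintype.card 𝕂 ^ (n + 1) - 1 := by
  rw [← Nat.card_congr (Equiv.ofBijective _ (hypBij hV))]
  have h := card_projSubtype_mul (𝕂 := 𝕂) (⊤ : Submodule 𝕂 (Module.Dual 𝕂 V))
  rw [finrank_top, Subspace.dual_finrank_eq, hV] at h
  rw [← h]
  congr 1
  exact (Nat.card_congr (Equiv.subtypeUnivEquiv (fun p => le_top))).symm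

lemma card_hyperplanes_through {n : ℕ} (hV : finrank 𝕂 V = n + 1) {v : V} (hv : v ≠ 0) :
    Nat.card {W : Submodule 𝕂 V // finrank 𝕂 W = n ∧ v ∈ W} * (Fintype.card 𝕂 - 1)
      = Fintype.card 𝕂 ^ n - 1 := by
  set ev : Module.Dual 𝕂 (Module.Dual 𝕂 V) := Module.Dual.eval 𝕂 V v with hev
  have hev0 : ev ≠ 0 := fun h0 => hv ((Module.eval_apply_eq_zero_iff 𝕂 v).1 h0)
  have hkerev : finrank 𝕂 (LinearMap.ker ev) = n := by
    have h2 := Module.Dual.finrank_ker_add_one_of_ne_zero hev0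
    rw [Subspace.dual_finrank_eq, hV] at h2
    omega
  have key : ∀ p : Projectivization 𝕂 (Module.Dual 𝕂 V),
      p.submodule ≤ LinearMap.ker ev ↔ v ∈ LinearMap.ker p.rep := by
    intro p
    rw [Projectivization.submodule_eq, Submodule.span_singleton_le_iff_mem,
      LinearMap.mem_ker, LinearMap.mem_ker, hev, Module.Dual.eval_apply]
  have e : Function.Bijective (fun p : {p : Projectivization 𝕂 (Module.Dual 𝕂 V) //
      p.submodule ≤ LinearMap.ker ev} =>
      (⟨LinearMap.ker p.1.rep, hyp_finrank hV p.1, (key p.1).1 p.2⟩ :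
        {W : Submodule 𝕂 V // finrank 𝕂 W = n ∧ v ∈ W})) := by
    constructor
    · rintro ⟨p, hp⟩ ⟨q, hq⟩ h
      have h1 : LinearMap.ker p.rep = LinearMap.ker q.rep := congrArg Subtype.val h
      exact Subtype.ext ((hypBij hV).1 (Subtype.ext h1))
    · rintro ⟨W, hW, hvW⟩
      obtain ⟨p, hp⟩ := (hypBij hV).2 ⟨W, hW⟩
      have h1 : LinearMap.ker p.rep = W := congrArg Subtype.val hp
      exact ⟨⟨p, (key p).2 (h1 ▸ hvW)⟩, Subtype.ext h1⟩
  rw [← Nat.card_congr (Equiv.ofBijective _ e)]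
  have h := card_projSubtype_mul (LinearMap.ker ev)
  rw [hkerev] at h
  exact h

end Counting2

lemma sum_modEq_aux {ι : Type*} (s : Finset ι) (f g : ι → ℕ) (m : ℕ)
    (h : ∀ i ∈ s, f i ≡ g i [MOD m]) :
    (∑ i ∈ s, f i) ≡ (∑ i ∈ s, g i) [MOD m] := by
  induction s using Finset.cons_induction with
  | empty => rfl
  | cons a s ha ih =>
    rw [Finset.sum_cons, Finset.sum_cons]
    exact (h a (Finset.mem_cons_self a s)).add
      (ih fun i hi => h i (Finset.mem_cons.2 (Or.inr hi)))


/-- If `K` is of type `(a,b,c)_{n-1}` in `PG(n,q)` with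
`a ≡ b ≡ c ≡ θ_{n-1} ≡ α (mod β)` and `α, β` coprime positive integers,
then `k ≡ θ_n (mod β)`. -/
theorem statement0 [Fintype F] (q n a b c α β : ℕ) (hq : Fintype.card F = q)
    (K : Set (PGPoint F n)) (hK : IsType3 F n K a b c)
    (hα : 0 < α) (hβ : 0 < β) (hcop : Nat.Coprime α β)
    (ha : a ≡ α [MOD β]) (hb : b ≡ α [MOD β]) (hc : c ≡ α [MOD β])
    (hθ : theta q (n - 1) ≡ α [MOD β]) :
    K.ncard ≡ theta q n [MOD β] := by
  classical
  have hq2 : 2 ≤ q := hq ▸ Fintype.one_lt_card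
  rcases Nat.eq_zero_or_pos n with hn | hn
  · -- degenerate case n = 0 : the only hyperplane is ⊥ and meets K in 0 points
    subst hn
    obtain ⟨hall, ⟨Wa, hWa, hWa2⟩, -, -⟩ := hK
    have hWbot : Wa = ⊥ := Submodule.finrank_eq_zero.1 hWa
    have ha0 : a = 0 := by
      rw [← hWa2, hWbot]
      have hempty : K ∩ projSet F 0 ⊥ = ∅ := by
        ext x
        simp only [mem_inter_iff, mem_empty_iff_false, iff_false]
        rintro ⟨-, hx⟩
        have h1 : x.submodule = ⊥ := le_bot_iff.1 hx
        have h2 := x.finrank_submodule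
        rw [h1, finrank_bot] at h2
        exact absurd h2 (by omega)
      rw [hempty, ncard_empty]
    have hβ1 : β = 1 := by
      have hdvd : β ∣ α := Nat.modEq_zero_iff_dvd.1 (ha0 ▸ ha).symm
      exact Nat.dvd_one.1 (hcop ▸ Nat.dvd_gcd hdvd dvd_rfl)
    subst hβ1
    exact Nat.modEq_one
  · -- main case n ≥ 1
    set V := (Fin (n + 1) → F) with hVdef
    have hV : finrank F V = n + 1 := Module.finrank_fin_fun F
    have hq1 : 1 ≤ q - 1 := by omega
    have ht1 : theta q n * (q - 1) = q ^ (n + 1) - 1 := by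
      rw [theta, Nat.div_mul_cancel (by simpa using Nat.sub_dvd_pow_sub_pow q 1 (n + 1))]
    have ht2 : theta q (n - 1) * (q - 1) = q ^ n - 1 := by
      rw [theta, show n - 1 + 1 = n by omega,
        Nat.div_mul_cancel (by simpa using Nat.sub_dvd_pow_sub_pow q 1 n)]
    haveI : Finite (Submodule F V) :=
      Finite.of_injective (fun W => (W : Set V)) SetLike.coe_injective
    haveI : Finite (PGPoint F n) := Quotient.finite _
    haveI : Fintype (Submodule F V) := Fintype.ofFinite _
    haveI : Fintype (PGPoint F n) := Fintype.ofFinite _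
    set Hf : Finset (Submodule F V) := Finset.univ.filter (fun W => finrank F W = n) with hHf
    set Kf : Finset (PGPoint F n) := K.toFinset with hKf
    -- number of hyperplanes
    have hHcard : Hf.card = theta q n := by
      have h1 : Hf.card = Nat.card {W : Submodule F V // finrank F W = n} := by
        rw [Nat.card_eq_fintype_card, Fintype.card_subtype]
      have h2 := card_hyperplanes (𝕂 := F) (V := V) hV
      rw [hq, ← ht1, ← h1] at h2
      exact Nat.eq_of_mul_eq_mul_right (by omega) h2
    -- number of hyperplanes through a point
    have hMcard : ∀ x : PGPoint F n,
        (Hf.filter (fun W => x.submodule ≤ W)).card = theta q (n - 1) := by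
      intro x
      have h1 : (Hf.filter (fun W => x.submodule ≤ W)).card
          = Nat.card {W : Submodule F V // finrank F W = n ∧ x.submodule ≤ W} := by
        rw [hHf, Finset.filter_filter, Nat.card_eq_fintype_card, Fintype.card_subtype]
      have he : {W : Submodule F V // finrank F W = n ∧ x.submodule ≤ W}
          ≃ {W : Submodule F V // finrank F W = n ∧ x.rep ∈ W} :=
        Equiv.subtypeEquivRight (fun W => by
          rw [Projectivization.submodule_eq, Submodule.span_singleton_le_iff_mem])
      have h2 := card_hyperplanes_through (𝕂 := F) (V := V) hV x.rep_nonzero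
      rw [hq, ← ht2, ← Nat.card_congr he, ← h1] at h2
      exact Nat.eq_of_mul_eq_mul_right (by omega) h2
    -- double counting
    have hstep : ∀ W : Submodule F V,
        (K ∩ projSet F n W).ncard = (Kf.filter (fun x => x.submodule ≤ W)).card := by
      intro W
      rw [ncard_eq_toFinset_card']
      congr 1
      ext x
      simp [hKf, projSet, Set.mem_toFinset]
      exact Set.mem_toFinset
    have hdouble : ∑ W ∈ Hf, (K ∩ projSet F n W).ncard
        = K.ncard * theta q (n - 1) := by
      calc ∑ W ∈ Hf, (K ∩ projSet F n W).ncard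
          = ∑ W ∈ Hf, ∑ x ∈ Kf, (if x.submodule ≤ W then 1 else 0) := by
            refine Finset.sum_congr rfl (fun W _ => ?_)
            rw [hstep W, Finset.card_filter]
        _ = ∑ x ∈ Kf, ∑ W ∈ Hf, (if x.submodule ≤ W then 1 else 0) := Finset.sum_comm
        _ = ∑ x ∈ Kf, (Hf.filter (fun W => x.submodule ≤ W)).card := by
            refine Finset.sum_congr rfl (fun x _ => ?_)
            rw [Finset.card_filter]
        _ = ∑ x ∈ Kf, theta q (n - 1) := Finset.sum_congr rfl (fun x _ => hMcard x)
        _ = Kf.card * theta q (n - 1) := by rw [Finset.sum_const, smul_eq_mul]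
        _ = K.ncard * theta q (n - 1) := by rw [ncard_eq_toFinset_card']
    -- the congruences
    have hsum : (∑ W ∈ Hf, (K ∩ projSet F n W).ncard) ≡ theta q n * α [MOD β] := by
      have := sum_modEq_aux Hf (fun W => (K ∩ projSet F n W).ncard) (fun _ => α) β
        (fun W hW => by
          show (K ∩ projSet F n W).ncard ≡ α [MOD β]
          rcases hK.1 W (by simpa [hHf] using hW) with h | h | h <;> rw [h]
          · exact ha
          · exact hb
          · exact hc)
      rwa [Finset.sum_const, smul_eq_mul, hHcard] at this
    have hfinal : K.ncard * α ≡ theta q n * α [MOD β] :=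
      ((hθ.symm.mul_left K.ncard).trans (hdouble ▸ hsum))
    exact Nat.ModEq.cancel_right_of_coprime (by rwa [Nat.Coprime, Nat.gcd_comm] at hcop) hfinal

end
end

section
/- Let K be a point set of type (a,b,c)_{n-1} in PG(n,q) with n ≥ 2 and a, b, c pairwise distinct. Then t_a·(b−a)(c−a) = k²·θ_{n-2} − k·(θ_{n-2} + (b+c−1)·θ_{n-1}) + bc·θ_n, t_b·(c−b)(a−b) = k²·θ_{n-2} − k·(θ_{n-2} + (a+c−1)·θ_{n-1}) + ac·θ_n, and t_c·(a−c)(b−c) = k²·θ_{n-2} − k·(θ_{n-2} + (a+b−1)·θ_{n-1}) + ab·θ_n (as identities of integers, where the left-hand sides may involve negative factors). -/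
open Module Set

set_option maxSynthPendingDepth 3

noncomputable section

variable (F : Type) [Field F]

namespace Stmt3Aux

variable {F}

instance finiteProj (V : Type) [AddCommGroup V] [Module F V] [Finite V] :
    Finite (Projectivization F V) :=
  Quotient.finite _

instance finiteSubmodule (V : Type) [AddCommGroup V] [Module F V] [Finite V] :
    Finite (Submodule F V) :=
  Finite.of_injective (fun W => (W : Set V)) SetLike.coe_injective

variable [Fintype F]

lemma card_proj_mul (V : Type) [AddCommGroup V] [Module F V] [Finite V] :
    Nat.card (Projectivization F V) * (Fintype.card F - 1) = Nat.card V - 1 := by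
  classical
  cases nonempty_fintype V
  set f : {v : V // v ≠ 0} → Projectivization F V := fun v => Projectivization.mk F v.1 v.2
    with hf
  have hfiber : ∀ y : Projectivization F V,
      Nat.card {x : {v : V // v ≠ 0} // f x = y} = Fintype.card F - 1 := by
    intro y
    have hb : Function.Bijective (fun c : Fˣ =>
        (⟨⟨(c : F) • y.rep, smul_ne_zero c.ne_zero y.rep_nonzero⟩, by
          show Projectivization.mk F _ _ = y
          conv_rhs => rw [← y.mk_rep]
          exact (Projectivization.mk_eq_mk_iff F _ _ _ y.rep_nonzero).mpr ⟨c, rfl⟩⟩ :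
          {x : {v : V // v ≠ 0} // f x = y})) := by
      constructor
      · intro c c' h
        have h2 : (c : F) • y.rep = (c' : F) • y.rep :=
          congrArg (fun z => (z.1.1 : V)) h
        exact Units.ext (smul_left_injective F y.rep_nonzero h2)
      · rintro ⟨⟨v, hv⟩, hfv⟩
        have hmk : Projectivization.mk F v hv = Projectivization.mk F y.rep y.rep_nonzero := by
          rw [y.mk_rep]; exact hfv
        obtain ⟨a, ha⟩ := (Projectivization.mk_eq_mk_iff F _ _ _ _).mp hmk
        refine ⟨a, ?_⟩
        apply Subtype.ext; apply Subtype.ext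
        simpa [Units.smul_def] using ha
    rw [← Nat.card_eq_of_bijective _ hb, Nat.card_eq_fintype_card, Fintype.card_units]
  have hsig := Nat.card_congr (Equiv.sigmaFiberEquiv f)
  have h1 : Nat.card {v : V // v ≠ 0} = Nat.card V - 1 := by
    rw [Nat.card_eq_fintype_card, Nat.card_eq_fintype_card]
    have : Fintype.card {v : V // ¬ v = 0} = Fintype.card V - Fintype.card {v : V // v = 0} :=
      Fintype.card_subtype_compl _
    simpa using this
  cases nonempty_fintype (Projectivization F V)
  rw [← h1, ← hsig, Nat.card_eq_fintype_card, Nat.card_eq_fintype_card, Fintype.card_sigma]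
  have : ∀ y : Projectivization F V, Fintype.card {x : {v : V // v ≠ 0} // f x = y}
      = Fintype.card F - 1 := fun y => by rw [← Nat.card_eq_fintype_card]; exact hfiber y
  simp only [this, Finset.sum_const, smul_eq_mul, Nat.card_eq_fintype_card]
  rw [Finset.card_univ]

omit [Fintype F] in
lemma finrank_dualAnnihilator {V : Type} [AddCommGroup V] [Module F V] [FiniteDimensional F V]
    (U : Submodule F V) :
    finrank F U.dualAnnihilator = finrank F V - finrank F U := by
  have h1 : finrank F U.dualAnnihilator = finrank F (V ⧸ U) :=
    (Subspace.quotEquivAnnihilator U).symm.finrank_eq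
  have h2 : finrank F (V ⧸ U) + finrank F U = finrank F V :=
    Submodule.finrank_quotient_add_finrank U
  omega

omit [Fintype F] in
/-- Hyperplanes containing `U` are in bijection with the projectivization of the
dual annihilator of `U`. -/
def hyperEquiv {V : Type} [AddCommGroup V] [Module F V] [FiniteDimensional F V]
    (hV : 1 ≤ finrank F V) (U : Submodule F V) :
    {W : Submodule F V // finrank F W = finrank F V - 1 ∧ U ≤ W} ≃
      Projectivization F U.dualAnnihilator := by
  classical
  refine Equiv.trans ?_ (Projectivization.equivSubmodule F U.dualAnnihilator).symm
  have e1 : {W : Submodule F V // finrank F W = finrank F V - 1 ∧ U ≤ W} ≃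
      {L : Submodule F (Module.Dual F V) // finrank F L = 1 ∧ L ≤ U.dualAnnihilator} := by
    refine
      { toFun := fun W => ⟨W.1.dualAnnihilator, ?_, ?_⟩
        invFun := fun L => ⟨L.1.dualCoannihilator, ?_, ?_⟩
        left_inv := fun W => Subtype.ext Subspace.dualAnnihilator_dualCoannihilator_eq
        right_inv := fun L => Subtype.ext Subspace.dualCoannihilator_dualAnnihilator_eq }
    · rw [finrank_dualAnnihilator, W.2.1]
      omega
    · exact Submodule.dualAnnihilator_anti W.2.2
    · rw [Subspace.finrank_dualCoannihilator_eq, finrank_dualAnnihilator, L.2.1,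
        Subspace.dual_finrank_eq]
    · intro u hu
      rw [Submodule.mem_dualCoannihilator]
      intro φ hφ
      exact (Submodule.mem_dualAnnihilator φ).mp (L.2.2 hφ) u hu
  refine e1.trans ?_
  set A := U.dualAnnihilator
  have e2 : {L' : Submodule F A // finrank F L' = 1} ≃
      {x : {L : Submodule F (Module.Dual F V) // L ≤ A} // finrank F x.1 = 1} := by
    refine (Submodule.MapSubtype.orderIso A).toEquiv.subtypeEquiv fun L' => ?_
    have : finrank F (Submodule.map A.subtype L') = finrank F L' :=
      (Submodule.equivMapOfInjective A.subtype (Submodule.injective_subtype A) L').symm.finrank_eq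
    show finrank F L' = 1 ↔ finrank F (Submodule.map A.subtype L') = 1
    rw [this]
  refine Equiv.trans ?_ e2.symm
  refine Equiv.trans (Equiv.subtypeEquivRight fun L => and_comm) ?_
  exact (Equiv.subtypeSubtypeEquivSubtypeInter _ _).symm

lemma theta_mul {q : ℕ} (hq : 2 ≤ q) (m : ℕ) : theta q m * (q - 1) = q ^ (m + 1) - 1 := by
  have h : (q - 1) ∣ q ^ (m + 1) - 1 := by
    simpa using Nat.sub_dvd_pow_sub_pow q 1 (m + 1)
  rw [theta, Nat.div_mul_cancel h]

lemma card_hyper {V : Type} [AddCommGroup V] [Module F V] [Finite V]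
    (hV : 1 ≤ finrank F V) (U : Submodule F V) :
    Nat.card {W : Submodule F V // finrank F W = finrank F V - 1 ∧ U ≤ W}
        * (Fintype.card F - 1)
      = Fintype.card F ^ (finrank F V - finrank F U) - 1 := by
  classical
  cases nonempty_fintype V
  have : FiniteDimensional F V := inferInstance
  have hfin : Finite U.dualAnnihilator := by
    have hd : Finite (Module.Dual F V) := by
      have : Finite (V →ₗ[F] F) := Finite.of_injective (fun f => (f : V → F))
        (fun f g h => LinearMap.ext fun v => congrFun h v)
      exact this
    exact Subtype.finite
  rw [Nat.card_congr (hyperEquiv hV U), card_proj_mul]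
  congr 1
  cases nonempty_fintype U.dualAnnihilator
  rw [Nat.card_eq_fintype_card, card_eq_pow_finrank (K := F), finrank_dualAnnihilator]

lemma card_hyper_theta {V : Type} [AddCommGroup V] [Module F V] [Finite V]
    {n : ℕ} (hV : finrank F V = n + 1) (U : Submodule F V) (hU : finrank F U ≤ n) :
    Nat.card {W : Submodule F V // finrank F W = n ∧ U ≤ W}
      = theta (Fintype.card F) (n - finrank F U) := by
  have hq2 : 2 ≤ Fintype.card F := Fintype.one_lt_card
  have h1 := card_hyper (F := F) (by omega) U
  rw [hV] at h1
  simp only [Nat.add_sub_cancel] at h1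
  have h2 := theta_mul hq2 (n - finrank F U)
  have h3 : n - finrank F U + 1 = n + 1 - finrank F U := by omega
  rw [h3] at h2
  have hqpos : 0 < Fintype.card F - 1 := by omega
  apply Nat.eq_of_mul_eq_mul_right hqpos
  rw [h1, h2]

omit [Fintype F] in
lemma finrank_sup_eq_two {V : Type} [AddCommGroup V] [Module F V] [FiniteDimensional F V]
    {x y : Projectivization F V} (h : x ≠ y) :
    finrank F ↥(x.submodule ⊔ y.submodule) = 2 := by
  have hxy : x.submodule ≠ y.submodule := fun h' => h (Projectivization.submodule_injective h')
  have h1 : finrank F x.submodule = 1 := x.finrank_submodule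
  have h2 : finrank F y.submodule = 1 := y.finrank_submodule
  have hinf : x.submodule ⊓ y.submodule = ⊥ := by
    by_contra hne
    have hpos : 0 < finrank F ↥(x.submodule ⊓ y.submodule) := by
      rcases Nat.eq_zero_or_pos (finrank F ↥(x.submodule ⊓ y.submodule)) with h0 | h0
      · exact absurd (Submodule.finrank_eq_zero.mp h0) hne
      · exact h0
    have e1 : x.submodule ⊓ y.submodule = x.submodule :=
      Submodule.eq_of_le_of_finrank_le inf_le_left (by omega)
    have e2 : x.submodule ⊓ y.submodule = y.submodule :=
      Submodule.eq_of_le_of_finrank_le inf_le_right (by omega)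
    exact hxy (e1 ▸ e2)
  have hsum := Submodule.finrank_sup_add_finrank_inf_eq x.submodule y.submodule
  rw [hinf, h1, h2, finrank_bot] at hsum
  omega

end Stmt3Aux

open Stmt3Aux in
/-- For `K` of type `(a,b,c)_{n-1}` in `PG(n,q)`, `n ≥ 2`, with `a,b,c`
pairwise distinct, the three quadratic identities for `t_a`, `t_b`, `t_c` hold in `ℤ`. -/
theorem statement3 [Fintype F] (q n a b c : ℕ) (hn : 2 ≤ n) (hq : Fintype.card F = q)
    (hab : a ≠ b) (hbc : b ≠ c) (hac : a ≠ c)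
    (K : Set (PGPoint F n)) (hK : IsType3 F n K a b c) :
    (tnum F n K a : ℤ) * ((b : ℤ) - a) * ((c : ℤ) - a)
        = (K.ncard : ℤ) ^ 2 * (theta q (n - 2) : ℤ)
          - (K.ncard : ℤ) * ((theta q (n - 2) : ℤ) + ((b : ℤ) + c - 1) * (theta q (n - 1) : ℤ))
          + (b : ℤ) * c * (theta q n : ℤ) ∧
    (tnum F n K b : ℤ) * ((c : ℤ) - b) * ((a : ℤ) - b)
        = (K.ncard : ℤ) ^ 2 * (theta q (n - 2) : ℤ)
          - (K.ncard : ℤ) * ((theta q (n - 2) : ℤ) + ((a : ℤ) + c - 1) * (theta q (n - 1) : ℤ))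
          + (a : ℤ) * c * (theta q n : ℤ) ∧
    (tnum F n K c : ℤ) * ((a : ℤ) - c) * ((b : ℤ) - c)
        = (K.ncard : ℤ) ^ 2 * (theta q (n - 2) : ℤ)
          - (K.ncard : ℤ) * ((theta q (n - 2) : ℤ) + ((a : ℤ) + b - 1) * (theta q (n - 1) : ℤ))
          + (a : ℤ) * b * (theta q n : ℤ) := by
  classical
  subst hq
  set q := Fintype.card F with hqdef
  have hfV : finrank F (Fin (n + 1) → F) = n + 1 := by simp
  have : FiniteDimensional F (Fin (n + 1) → F) := by infer_instance
  cases nonempty_fintype (Submodule F (Fin (n + 1) → F))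
  cases nonempty_fintype (PGPoint F n)
  set f : Submodule F (Fin (n + 1) → F) → ℕ := fun W => (K ∩ projSet F n W).ncard with hfdef
  set HS : Finset (Submodule F (Fin (n + 1) → F)) :=
    Finset.univ.filter (fun W => finrank F W = n) with hHS
  set KF : Finset (PGPoint F n) := K.toFinset with hKF
  set k := K.ncard with hk
  have hKFcard : KF.card = k := by rw [hKF, hk, Set.ncard_eq_toFinset_card']
  -- the fundamental count
  have count : ∀ U : Submodule F (Fin (n + 1) → F), finrank F U ≤ n →
      (HS.filter fun W => U ≤ W).card = theta q (n - finrank F U) := by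
    intro U hU
    have h1 : Nat.card {W : Submodule F (Fin (n + 1) → F) // finrank F W = n ∧ U ≤ W}
        = theta q (n - finrank F U) := card_hyper_theta hfV U hU
    rw [← h1, Nat.card_eq_fintype_card, Fintype.card_subtype]
    congr 1
    rw [hHS, Finset.filter_filter]
  -- expressing f via a filter on KF
  have hfW : ∀ W, f W = (KF.filter fun x => x.submodule ≤ W).card := by
    intro W
    show (K ∩ projSet F n W).ncard = _
    rw [Set.ncard_eq_toFinset_card']
    congr 1
    ext x
    simp [projSet, hKF, Set.mem_toFinset, -Set.toFinset_inter]
    exact Set.mem_toFinset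
  -- E0
  have E0 : HS.card = theta q n := by
    have h := count ⊥ (by simp)
    rw [Finset.filter_true_of_mem (fun W _ => bot_le)] at h
    rwa [finrank_bot, Nat.sub_zero] at h
  -- E1
  have E1 : ∑ W ∈ HS, f W = k * theta q (n - 1) := by
    have step1 : ∀ W ∈ HS, f W = ∑ x ∈ KF, if x.submodule ≤ W then 1 else 0 := by
      intro W _
      rw [hfW, Finset.card_filter]
    rw [Finset.sum_congr rfl step1, Finset.sum_comm]
    have step2 : ∀ x ∈ KF, (∑ W ∈ HS, if x.submodule ≤ W then 1 else 0) = theta q (n - 1) := by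
      intro x _
      rw [← Finset.card_filter]
      have hx : finrank F x.submodule = 1 := x.finrank_submodule
      have h := count x.submodule (by omega)
      rwa [hx] at h
    rw [Finset.sum_congr rfl step2, Finset.sum_const, smul_eq_mul, hKFcard]
  -- pair counts
  have hpair : ∀ x y : PGPoint F n,
      (HS.filter fun W => x.submodule ≤ W ∧ y.submodule ≤ W).card
        = if x = y then theta q (n - 1) else theta q (n - 2) := by
    intro x y
    have hrw : (HS.filter fun W => x.submodule ≤ W ∧ y.submodule ≤ W)
        = HS.filter (fun W => x.submodule ⊔ y.submodule ≤ W) := by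
      apply Finset.filter_congr
      intro W _
      simp [sup_le_iff]
    rw [hrw]
    by_cases hxy : x = y
    · subst hxy
      rw [if_pos rfl, sup_idem]
      have hx : finrank F x.submodule = 1 := x.finrank_submodule
      have h := count x.submodule (by omega)
      rwa [hx] at h
    · rw [if_neg hxy]
      have hx2 : finrank F ↥(x.submodule ⊔ y.submodule) = 2 := finrank_sup_eq_two hxy
      have h := count (x.submodule ⊔ y.submodule) (by omega)
      rwa [hx2] at h
  -- E2'
  have E2 : (∑ W ∈ HS, f W * f W) + k * theta q (n - 2)
      = k * (theta q (n - 1) + k * theta q (n - 2)) := by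
    have step1 : ∀ W ∈ HS, f W * f W
        = ∑ x ∈ KF, ∑ y ∈ KF,
            (if x.submodule ≤ W ∧ y.submodule ≤ W then 1 else 0) := by
      intro W _
      rw [hfW, Finset.card_filter, Finset.sum_mul_sum]
      refine Finset.sum_congr rfl fun x _ => Finset.sum_congr rfl fun y _ => ?_
      by_cases h1 : x.submodule ≤ W <;> by_cases h2 : y.submodule ≤ W <;> simp [h1, h2]
    rw [Finset.sum_congr rfl step1, Finset.sum_comm]
    have step2 : ∀ x ∈ KF,
        (∑ W ∈ HS, ∑ y ∈ KF, (if x.submodule ≤ W ∧ y.submodule ≤ W then 1 else 0))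
          = ∑ y ∈ KF, (if x = y then theta q (n - 1) else theta q (n - 2)) := by
      intro x _
      rw [Finset.sum_comm]
      refine Finset.sum_congr rfl fun y _ => ?_
      rw [← Finset.card_filter, hpair]
    rw [Finset.sum_congr rfl step2]
    have step3 : ∀ x ∈ KF,
        (∑ y ∈ KF, (if x = y then theta q (n - 1) else theta q (n - 2))) + theta q (n - 2)
          = theta q (n - 1) + k * theta q (n - 2) := by
      intro x hx
      have split : ∀ y : PGPoint F n,
          (if x = y then theta q (n - 1) else theta q (n - 2))
            = (if x = y then theta q (n - 1) else 0) + (if x = y then 0 else theta q (n - 2)) := by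
        intro y; by_cases h : x = y <;> simp [h]
      rw [Finset.sum_congr rfl (fun y _ => split y), Finset.sum_add_distrib]
      have s1 : (∑ y ∈ KF, if x = y then theta q (n - 1) else 0) = theta q (n - 1) := by
        rw [Finset.sum_ite_eq, if_pos hx]
      have s2 : (∑ y ∈ KF, if x = y then theta q (n - 2) else 0)
          + (∑ y ∈ KF, if x = y then 0 else theta q (n - 2)) = k * theta q (n - 2) := by
        rw [← Finset.sum_add_distrib]
        have : ∀ y ∈ KF, ((if x = y then theta q (n - 2) else 0)
            + (if x = y then 0 else theta q (n - 2))) = theta q (n - 2) := by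
          intro y _; by_cases h : x = y <;> simp [h]
        rw [Finset.sum_congr rfl this, Finset.sum_const, smul_eq_mul, hKFcard]
      have s3 : (∑ y ∈ KF, if x = y then theta q (n - 2) else 0) = theta q (n - 2) := by
        rw [Finset.sum_ite_eq, if_pos hx]
      omega
    have total : (∑ x ∈ KF, ∑ y ∈ KF, (if x = y then theta q (n - 1) else theta q (n - 2)))
        + k * theta q (n - 2) = k * (theta q (n - 1) + k * theta q (n - 2)) := by
      have : (∑ x ∈ KF, ∑ y ∈ KF, (if x = y then theta q (n - 1) else theta q (n - 2)))
          + k * theta q (n - 2)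
          = ∑ x ∈ KF, ((∑ y ∈ KF, (if x = y then theta q (n - 1) else theta q (n - 2)))
              + theta q (n - 2)) := by
        rw [Finset.sum_add_distrib, Finset.sum_const, smul_eq_mul, hKFcard, mul_comm]
      rw [this, Finset.sum_congr rfl step3, Finset.sum_const, smul_eq_mul, hKFcard]
    exact total
  -- partition of HS by the value of f
  set Ta := (HS.filter fun W => f W = a).card with hTa
  set Tb := (HS.filter fun W => f W = b).card with hTb
  set Tc := (HS.filter fun W => f W = c).card with hTc
  have hval : ∀ W ∈ HS, f W = a ∨ f W = b ∨ f W = c := by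
    intro W hW
    have : finrank F W = n := (Finset.mem_filter.mp hW).2
    exact hK.1 W this
  have partition : ∀ g : ℕ → ℕ, ∑ W ∈ HS, g (f W) = g a * Ta + g b * Tb + g c * Tc := by
    intro g
    rw [← Finset.sum_filter_add_sum_filter_not HS (fun W => f W = a)]
    rw [← Finset.sum_filter_add_sum_filter_not (HS.filter (fun W => ¬ f W = a))
      (fun W => f W = b)]
    have h1 : ∑ W ∈ HS.filter (fun W => f W = a), g (f W) = g a * Ta := by
      rw [Finset.sum_congr rfl (fun W hW => by rw [(Finset.mem_filter.mp hW).2]),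
        Finset.sum_const, smul_eq_mul, mul_comm, hTa]
    have hsetb : (HS.filter (fun W => ¬ f W = a)).filter (fun W => f W = b)
        = HS.filter (fun W => f W = b) := by
      rw [Finset.filter_filter]
      apply Finset.filter_congr
      intro W _
      constructor
      · exact fun h => h.2
      · exact fun h => ⟨fun h' => hab (h' ▸ h.symm ▸ rfl), h⟩
    have h2 : ∑ W ∈ (HS.filter (fun W => ¬ f W = a)).filter (fun W => f W = b), g (f W)
        = g b * Tb := by
      rw [hsetb, Finset.sum_congr rfl (fun W hW => by rw [(Finset.mem_filter.mp hW).2]),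
        Finset.sum_const, smul_eq_mul, mul_comm, hTb]
    have hsetc : (HS.filter (fun W => ¬ f W = a)).filter (fun W => ¬ f W = b)
        = HS.filter (fun W => f W = c) := by
      rw [Finset.filter_filter]
      apply Finset.filter_congr
      intro W hW
      constructor
      · rintro ⟨hna, hnb⟩
        rcases hval W hW with h | h | h
        · exact absurd h hna
        · exact absurd h hnb
        · exact h
      · intro h
        exact ⟨fun h' => hac (h' ▸ h.symm ▸ rfl), fun h' => hbc (h' ▸ h.symm ▸ rfl)⟩
    have h3 : ∑ W ∈ (HS.filter (fun W => ¬ f W = a)).filter (fun W => ¬ f W = b), g (f W)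
        = g c * Tc := by
      rw [hsetc, Finset.sum_congr rfl (fun W hW => by rw [(Finset.mem_filter.mp hW).2]),
        Finset.sum_const, smul_eq_mul, mul_comm, hTc]
    rw [h1, h2, h3]
    ring
  -- HS.card as a sum
  have P0 : Ta + Tb + Tc = theta q n := by
    have hp := partition (fun _ => 1)
    simp only [one_mul] at hp
    rw [Finset.card_eq_sum_ones] at E0
    omega
  have P1 : a * Ta + b * Tb + c * Tc = k * theta q (n - 1) := by
    have hp := partition id
    simp only [id_eq] at hp
    rw [← hp]
    exact E1
  have P2 : a * a * Ta + b * b * Tb + c * c * Tc + k * theta q (n - 2)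
      = k * (theta q (n - 1) + k * theta q (n - 2)) := by
    have hp := partition (fun m => m * m)
    beta_reduce at hp
    rw [← hp]
    exact E2
  -- tnum identities
  have htnum : ∀ m : ℕ, tnum F n K m = (HS.filter fun W => f W = m).card := by
    intro m
    rw [tnum, Set.ncard_eq_toFinset_card']
    congr 1
    ext W
    simp only [Set.mem_toFinset, Set.mem_setOf_eq, Finset.mem_filter, hHS,
      Finset.mem_univ, true_and, hfdef]
  have hta : tnum F n K a = Ta := htnum a
  have htb : tnum F n K b = Tb := htnum b
  have htc : tnum F n K c = Tc := htnum c
  -- cast everything to ℤ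
  have Z0 : (Ta : ℤ) + Tb + Tc = theta q n := by exact_mod_cast P0
  have Z1 : (a : ℤ) * Ta + b * Tb + c * Tc = k * theta q (n - 1) := by exact_mod_cast P1
  have Z2 : (a : ℤ) * a * Ta + b * b * Tb + c * c * Tc + k * theta q (n - 2)
      = k * (theta q (n - 1) + k * theta q (n - 2)) := by exact_mod_cast P2
  rw [hta, htb, htc]
  refine ⟨?_, ?_, ?_⟩
  · linear_combination Z2 - ((b : ℤ) + c) * Z1 + (b : ℤ) * c * Z0
  · linear_combination Z2 - ((a : ℤ) + c) * Z1 + (a : ℤ) * c * Z0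
  · linear_combination Z2 - ((a : ℤ) + b) * Z1 + (a : ℤ) * b * Z0
end
end

section
/- Let P be a point of PG(n,q) and let K be a set of points of PG(n,q) such that there is a fixed number t with |K ∩ H| = t for every hyperplane H of PG(n,q) not containing P. Then K ∪ {P} is a cone with vertex P, i.e. for every point Q ∈ K ∪ {P}, every point of the line PQ lies in K ∪ {P}. -/
open Module Set

noncomputable section

variable (F : Type) [Field F]

set_option linter.unusedSectionVars false

section Aux

open Function
variable {K : Type*} [Field K] [Fintype K] {V : Type*} [AddCommGroup V] [Module K V]
  [FiniteDimensional K V]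

lemma dual_eq_smul_of_ker_eq {φ ψ : Module.Dual K V} (hφ : φ ≠ 0)
    (h : LinearMap.ker φ = LinearMap.ker ψ) : ∃ c : K, ψ = c • φ := by
  obtain ⟨u, hu⟩ : ∃ u, φ u ≠ 0 := by
    by_contra hc; push_neg at hc; exact hφ (LinearMap.ext fun v => hc v)
  refine ⟨ψ u / φ u, LinearMap.ext fun v => ?_⟩
  have hv : v - (φ v / φ u) • u ∈ LinearMap.ker φ := by
    simp [LinearMap.mem_ker, map_sub, map_smul, div_mul_cancel₀, hu]
  rw [h, LinearMap.mem_ker, map_sub, map_smul, sub_eq_zero] at hv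
  rw [LinearMap.smul_apply, smul_eq_mul]
  rw [smul_eq_mul] at hv
  linear_combination hv

lemma finrank_ker_dual {φ : Module.Dual K V} (hφ : φ ≠ 0) :
    finrank K (LinearMap.ker φ) = finrank K V - 1 := by
  obtain ⟨u, hu⟩ : ∃ u, φ u ≠ 0 := by
    by_contra hc; push_neg at hc; exact hφ (LinearMap.ext fun v => hc v)
  have hr : LinearMap.range φ = ⊤ := by
    rw [eq_top_iff]; intro c _
    exact ⟨(c / φ u) • u, by simp [map_smul, div_mul_cancel₀, hu]⟩
  have := LinearMap.finrank_range_add_finrank_ker φ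
  rw [hr, finrank_top, finrank_self] at this
  omega
/-- evaluation map on a family of vectors -/
def evalMap {m : ℕ} (u : Fin m → V) : Module.Dual K V →ₗ[K] (Fin m → K) :=
  LinearMap.pi fun i => LinearMap.applyₗ (u i)

@[simp] lemma evalMap_apply {m : ℕ} (u : Fin m → V) (φ : Module.Dual K V) (i : Fin m) :
    evalMap u φ i = φ (u i) := rfl

lemma evalMap_surjective {m : ℕ} {u : Fin m → V} (hu : LinearIndependent K u) :
    Surjective (evalMap (K := K) u) := by
  rw [← LinearMap.range_eq_top, eq_top_iff]
  intro g _
  have hg : g = ∑ j : Fin m, g j • (Pi.single j 1 : Fin m → K) := by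
    funext i
    simp [Finset.sum_apply, Pi.single_apply, Finset.sum_ite_eq']
  rw [hg]
  refine Submodule.sum_mem _ fun j _ => Submodule.smul_mem _ _ ?_
  -- find φ with φ (u i) = δ_{ij}
  have hnm : u j ∉ Submodule.span K (u '' {i | i ≠ j}) := by
    apply hu.notMem_span_image
    simp
  obtain ⟨f, hf, hf'⟩ := Submodule.exists_dual_map_eq_bot_of_notMem hnm inferInstance
  refine ⟨(f (u j))⁻¹ • f, ?_⟩
  funext i
  rcases eq_or_ne i j with rfl | hij
  · simp [inv_mul_cancel₀ hf]
  · have : f (u i) = 0 := by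
      have : f (u i) ∈ (Submodule.span K (u '' {i | i ≠ j})).map f :=
        Submodule.mem_map_of_mem (Submodule.subset_span ⟨i, hij, rfl⟩)
      rw [hf'] at this
      simpa using this
    simp [this, Pi.single_apply, hij]

lemma nat_card_preimage {M N : Type*} [AddCommGroup M] [AddCommGroup N] [Module K M]
    [Module K N] (f : M →ₗ[K] N) (hf : Surjective f) (T : Set N) :
    Nat.card (f ⁻¹' T : Set M) = Nat.card T * Nat.card (LinearMap.ker f) := by
  obtain ⟨s, hs⟩ := hf.hasRightInverse
  have e : (f ⁻¹' T : Set M) ≃ T × (LinearMap.ker f) :=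
    { toFun := fun u => (⟨f u.1, u.2⟩, ⟨u.1 - s (f u.1), by
        simp [LinearMap.mem_ker, map_sub, hs (f u.1)]⟩)
      invFun := fun p => ⟨s p.1.1 + p.2.1, by
        have : f (s p.1.1 + p.2.1) = p.1.1 := by
          rw [map_add, hs p.1.1, p.2.2, add_zero]
        simp only [Set.mem_preimage, this]; exact p.1.2⟩
      left_inv := fun u => by
        ext
        simp
      right_inv := fun p => by
        have h1 : f (s p.1.1 + p.2.1) = p.1.1 := by
          rw [map_add, hs p.1.1, p.2.2, add_zero]
        ext
        · simp [h1]
        · simp [h1] }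
  rw [Nat.card_congr e, Nat.card_prod]

lemma nat_card_module (M : Type*) [AddCommGroup M] [Module K M] [FiniteDimensional K M] :
    Nat.card M = Fintype.card K ^ finrank K M := by
  have : Finite M := Module.finite_of_finite K
  have : Fintype M := Fintype.ofFinite M
  rw [Nat.card_eq_fintype_card]
  exact card_eq_pow_finrank

lemma exists_dual_ker {n : ℕ} (hV : finrank K V = n + 1) {H : Submodule K V}
    (hH : finrank K H = n) : ∃ φ : Module.Dual K V, LinearMap.ker φ = H := by
  have hlt : H < ⊤ := lt_top_iff_ne_top.2 (by
    intro h; rw [h, finrank_top] at hH; omega)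
  obtain ⟨φ, hφ, hker⟩ := Submodule.exists_dual_map_eq_bot_of_lt_top hlt inferInstance
  have hle : H ≤ LinearMap.ker φ := by
    intro x hx
    have : φ x ∈ H.map φ := Submodule.mem_map_of_mem hx
    rw [hker] at this
    simpa using this
  refine ⟨φ, (Submodule.eq_of_le_of_finrank_le hle (by rw [hH, finrank_ker_dual hφ, hV]; omega)).symm⟩

/-- the fundamental count: number of hyperplanes containing a given independent family and
missing one further vector -/
lemma hyperplane_count {n k : ℕ} (hV : finrank K V = n + 1)
    {v : Fin k → V} {w : V} (h : LinearIndependent K (Fin.snoc v w : Fin (k+1) → V)) :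
    {H : Submodule K V | finrank K H = n ∧ (∀ i, v i ∈ H) ∧ w ∉ H}.ncard
      = Fintype.card K ^ (n - k) := by
  classical
  set q := Fintype.card K with hq
  set u : Fin (k+1) → V := Fin.snoc v w with hu
  set Φ : Set (Module.Dual K V) := {φ | (∀ i, φ (v i) = 0) ∧ φ w ≠ 0} with hΦdef
  set T : Set (Fin (k+1) → K) :=
    {f | (∀ i : Fin k, f i.castSucc = 0) ∧ f (Fin.last k) ≠ 0} with hTdef
  have hE : Surjective (evalMap (K := K) u) := evalMap_surjective h
  have hΦ : Φ = (evalMap (K := K) u) ⁻¹' T := by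
    ext φ
    simp only [hΦdef, hTdef, Set.mem_setOf_eq, Set.mem_preimage, evalMap_apply, hu,
      Fin.snoc_castSucc, Fin.snoc_last]
  -- card of T
  have hT : Nat.card T = q - 1 := by
    have e : T ≃ {c : K // c ≠ 0} :=
      { toFun := fun f => ⟨f.1 (Fin.last k), f.2.2⟩
        invFun := fun c => ⟨Fin.snoc 0 c.1, fun i => by simp [Fin.snoc_castSucc], by
          simpa [Fin.snoc_last] using c.2⟩
        left_inv := fun f => by
          ext j
          induction j using Fin.lastCases with
          | last => simp [Fin.snoc_last]
          | cast i => simp [Fin.snoc_castSucc, (f.2.1 i).symm]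
        right_inv := fun c => by simp [Fin.snoc_last] }
    rw [Nat.card_congr e, Nat.card_eq_fintype_card, Fintype.card_subtype_compl,
      Fintype.card_subtype_eq]
  -- card of the kernel
  have hkk : k + 1 ≤ n + 1 := by
    have := h.fintype_card_le_finrank
    simpa [hV] using this
  have hker : finrank K (LinearMap.ker (evalMap (K := K) u)) = n - k := by
    have h1 := LinearMap.finrank_range_add_finrank_ker (evalMap (K := K) u)
    rw [LinearMap.range_eq_top.2 hE, finrank_top] at h1
    have h2 : finrank K (Fin (k+1) → K) = k + 1 := by simp
    have h3 : finrank K (Module.Dual K V) = n + 1 := by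
      rw [Subspace.dual_finrank_eq, hV]
    omega
  have hΦcard : Nat.card Φ = (q - 1) * q ^ (n - k) := by
    rw [hΦ, nat_card_preimage _ hE, hT, nat_card_module (K := K), hker]
  -- now relate to hyperplanes
  set S : Set (Submodule K V) := {H | finrank K H = n ∧ (∀ i, v i ∈ H) ∧ w ∉ H} with hSdef
  have hchoice : ∀ H : S, ∃ φ : Module.Dual K V, LinearMap.ker φ = H.1 :=
    fun H => exists_dual_ker hV H.2.1
  choose φh hφh using hchoice
  have hφh0 : ∀ H : S, φh H ≠ 0 := by
    intro H h0
    have := hφh H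
    rw [h0, LinearMap.ker_zero] at this
    have : finrank K (H.1 : Submodule K V) = n + 1 := by rw [← this, finrank_top, hV]
    have := H.2.1
    omega
  have hφhw : ∀ H : S, φh H w ≠ 0 := by
    intro H hw0
    exact H.2.2.2 (by rw [← hφh H] at *; exact hw0)
  let f : S × {c : K // c ≠ 0} → Φ := fun p =>
    ⟨p.2.1 • φh p.1, by
      constructor
      · intro i
        have : v i ∈ LinearMap.ker (φh p.1) := (hφh p.1).symm ▸ p.1.2.2.1 i
        simp [LinearMap.mem_ker.1 this]
      · simp only [LinearMap.smul_apply, smul_eq_mul]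
        exact mul_ne_zero p.2.2 (hφhw p.1)⟩
  have hfbij : Bijective f := by
    constructor
    · rintro ⟨H, c⟩ ⟨H', c'⟩ hEq
      have hEq' : c.1 • φh H = c'.1 • φh H' := Subtype.ext_iff.1 hEq
      have hk : LinearMap.ker (c.1 • φh H) = LinearMap.ker (c'.1 • φh H') := by rw [hEq']
      rw [LinearMap.ker_smul _ _ c.2, LinearMap.ker_smul _ _ c'.2, hφh H, hφh H'] at hk
      have hHH' : H = H' := Subtype.ext hk
      subst hHH'
      have : c.1 = c'.1 := by
        obtain ⟨x, hx⟩ : ∃ x, φh H x ≠ 0 := by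
          by_contra hc; push_neg at hc; exact hφh0 H (LinearMap.ext fun y => hc y)
        have := congrArg (fun ψ => ψ x) hEq'
        simp only [LinearMap.smul_apply, smul_eq_mul] at this
        exact mul_right_cancel₀ hx this
      simp [Prod.ext_iff, Subtype.ext_iff, this]
    · rintro ⟨ψ, hψ1, hψ2⟩
      have hψ0 : ψ ≠ 0 := fun h0 => hψ2 (by rw [h0]; rfl)
      have hHS : LinearMap.ker ψ ∈ S := by
        refine ⟨?_, fun i => ?_, fun hw => hψ2 (LinearMap.mem_ker.1 hw)⟩
        · rw [finrank_ker_dual hψ0, hV]; omega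
        · exact LinearMap.mem_ker.2 (hψ1 i)
      obtain ⟨c, hc⟩ := dual_eq_smul_of_ker_eq (φ := φh ⟨_, hHS⟩) (ψ := ψ)
        (hφh0 ⟨_, hHS⟩) (hφh ⟨_, hHS⟩)
      have hc0 : c ≠ 0 := by
        intro h0
        rw [h0, zero_smul] at hc
        exact hψ0 hc
      exact ⟨(⟨_, hHS⟩, ⟨c, hc0⟩), Subtype.ext hc.symm⟩
  have : Nat.card Φ = Nat.card S * (q - 1) := by
    rw [← Nat.card_congr (Equiv.ofBijective f hfbij), Nat.card_prod]
    congr 1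
    rw [Nat.card_eq_fintype_card, Fintype.card_subtype_compl, Fintype.card_subtype_eq]
  rw [hΦcard] at this
  have hq2 : 1 < q := Fintype.one_lt_card
  have hS : Nat.card S = q ^ (n - k) := by
    have h1 : Nat.card S * (q-1) = (q ^ (n-k)) * (q - 1) := this.symm.trans (mul_comm _ _)
    exact Nat.eq_of_mul_eq_mul_right (by omega) h1
  rw [← Nat.card_coe_set_eq]
  exact hS

lemma hyperplane_count_one {n : ℕ} (hV : finrank K V = n + 1)
    {a w : V} (h : LinearIndependent K ![a, w]) :
    {H : Submodule K V | finrank K H = n ∧ a ∈ H ∧ w ∉ H}.ncard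
      = Fintype.card K ^ (n - 1) := by
  have hsnoc : (Fin.snoc ![a] w : Fin 2 → V) = ![a, w] := by
    funext i
    fin_cases i <;> simp [Fin.snoc]
  have := hyperplane_count (k := 1) hV (v := ![a]) (w := w) (by rw [hsnoc]; exact h)
  rw [← this]
  congr 1
  ext H
  simp [Fin.forall_fin_one]

lemma hyperplane_count_two {n : ℕ} (hV : finrank K V = n + 1)
    {a b w : V} (h : LinearIndependent K ![a, b, w]) :
    {H : Submodule K V | finrank K H = n ∧ a ∈ H ∧ b ∈ H ∧ w ∉ H}.ncard
      = Fintype.card K ^ (n - 2) := by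
  have hsnoc : (Fin.snoc ![a, b] w : Fin 3 → V) = ![a, b, w] := by
    funext i
    fin_cases i <;> simp [Fin.snoc] <;> rfl
  have := hyperplane_count (k := 2) hV (v := ![a, b]) (w := w) (by rw [hsnoc]; exact h)
  rw [← this]
  congr 1
  ext H
  simp [Fin.forall_fin_two, and_assoc]

lemma proj_submodule_le_iff {x : Projectivization K V} {H : Submodule K V} :
    x.submodule ≤ H ↔ x.rep ∈ H := by
  rw [Projectivization.submodule_eq, Submodule.span_singleton_le_iff_mem]

lemma proj_pair_indep {x y : Projectivization K V} (h : x ≠ y) :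
    LinearIndependent K ![x.rep, y.rep] := by
  rw [linearIndependent_fin2]
  refine ⟨y.rep_nonzero, fun a ha => h ?_⟩
  have ha0 : a ≠ 0 := by
    intro h0
    rw [h0, zero_smul] at ha
    exact x.rep_nonzero ha.symm
  have : Projectivization.mk K x.rep x.rep_nonzero = Projectivization.mk K y.rep y.rep_nonzero :=
    (Projectivization.mk_eq_mk_iff K _ _ _ _).2 ⟨Units.mk0 a ha0, ha⟩
  rwa [Projectivization.mk_rep, Projectivization.mk_rep] at this

lemma proj_sup_finrank {x y : Projectivization K V} (h : x ≠ y) :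
    finrank K (x.submodule ⊔ y.submodule : Submodule K V) = 2 := by
  have hinf : x.submodule ⊓ y.submodule = ⊥ := by
    by_contra hne
    have hlt : x.submodule ⊓ y.submodule ≤ x.submodule := inf_le_left
    have h1 : finrank K (x.submodule ⊓ y.submodule : Submodule K V) ≤ 1 := by
      calc finrank K (x.submodule ⊓ y.submodule : Submodule K V)
          ≤ finrank K x.submodule := Submodule.finrank_mono hlt
        _ = 1 := x.finrank_submodule
    have h2 : 1 ≤ finrank K (x.submodule ⊓ y.submodule : Submodule K V) := by
      rw [Nat.one_le_iff_ne_zero]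
      intro h0
      exact hne (Submodule.finrank_eq_zero.1 h0)
    have heq : x.submodule ⊓ y.submodule = x.submodule :=
      Submodule.eq_of_le_of_finrank_le hlt (by rw [x.finrank_submodule]; omega)
    have hxy : x.submodule ≤ y.submodule := heq ▸ inf_le_right
    have : x.submodule = y.submodule :=
      Submodule.eq_of_le_of_finrank_le hxy (by rw [x.finrank_submodule, y.finrank_submodule])
    exact h (Projectivization.submodule_injective this)
  have := Submodule.finrank_sup_add_finrank_inf_eq x.submodule y.submodule
  rw [hinf, x.finrank_submodule, y.finrank_submodule] at this
  simpa using this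

lemma proj_sup_eq {x y : Projectivization K V} (h : x ≠ y) {l : Submodule K V}
    (hx : x.submodule ≤ l) (hy : y.submodule ≤ l) (hl : finrank K l = 2) :
    x.submodule ⊔ y.submodule = l :=
  Submodule.eq_of_le_of_finrank_le (sup_le hx hy) (by rw [hl, proj_sup_finrank h])

lemma span_range_pair (a b : V) :
    Submodule.span K (Set.range ![a, b]) = Submodule.span K {a} ⊔ Submodule.span K {b} := by
  have : Set.range ![a, b] = {a, b} := by
    ext z
    simp only [Set.mem_range, Fin.exists_fin_two, Matrix.cons_val_zero, Matrix.cons_val_one,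
      Matrix.head_cons, Set.mem_insert_iff, Set.mem_singleton_iff]
    tauto
  rw [this, show ({a, b} : Set V) = insert a {b} from rfl, Submodule.span_insert]

lemma indep3 {a b w : V} (h2 : LinearIndependent K ![a, b])
    (hw : w ∉ Submodule.span K (Set.range ![a, b])) : LinearIndependent K ![a, b, w] := by
  have hsnoc : (Fin.snoc ![a, b] w : Fin 3 → V) = ![a, b, w] := by
    funext i
    fin_cases i <;> simp [Fin.snoc] <;> rfl
  rw [← hsnoc, linearIndependent_fin_snoc]
  exact ⟨h2, hw⟩

end Aux

section Key

variable {K : Type*} [Field K] [Fintype K]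

open scoped Classical in
lemma key_count {n t : ℕ} (P y : Projectivization K (Fin (n+1) → K))
    (Kset : Set (Projectivization K (Fin (n+1) → K)))
    (l : Submodule K (Fin (n+1) → K)) (hPl : P.submodule ≤ l) (hyl : y.submodule ≤ l)
    (hy : y ≠ P) (hl2 : finrank K l = 2)
    (hconst : ∀ W : Submodule K (Fin (n+1) → K), finrank K W = n →
      ¬ P.submodule ≤ W → (Kset ∩ {z | z.submodule ≤ W}).ncard = t) :
    t * Fintype.card K ^ (n-1) =
      (if y ∈ Kset then Fintype.card K ^ (n-1) else 0)
        + (Kset \ {z | z.submodule ≤ l}).ncard * Fintype.card K ^ (n-2) := by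
  classical
  set q := Fintype.card K with hqdef
  have hV : finrank K (Fin (n+1) → K) = n + 1 := by simp
  haveI : Finite (Submodule K (Fin (n+1) → K)) :=
    Finite.of_injective (fun W => (W : Set (Fin (n+1) → K))) SetLike.coe_injective
  haveI : Fintype (Submodule K (Fin (n+1) → K)) := Fintype.ofFinite _
  haveI : Finite (Projectivization K (Fin (n+1) → K)) :=
    Quotient.finite _
  haveI : Fintype (Projectivization K (Fin (n+1) → K)) := Fintype.ofFinite _
  set A : Finset (Submodule K (Fin (n+1) → K)) :=
    Finset.univ.filter
      (fun H => finrank K H = n ∧ y.submodule ≤ H ∧ ¬ P.submodule ≤ H) with hAdef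
  set KF : Finset (Projectivization K (Fin (n+1) → K)) := Kset.toFinset with hKFdef
  have hAmem : ∀ H, H ∈ A ↔ finrank K H = n ∧ y.submodule ≤ H ∧ ¬ P.submodule ≤ H := by
    intro H; simp [hAdef]
  have hAcard : A.card = q ^ (n-1) := by
    have h1 := hyperplane_count_one hV (proj_pair_indep hy)
    rw [Set.ncard_eq_toFinset_card'] at h1
    rw [← h1]
    congr 1
    ext H
    simp [hAmem, Set.mem_toFinset, proj_submodule_le_iff]
  have hterm : ∀ H ∈ A, (Kset ∩ {z | z.submodule ≤ H}).ncard
      = ∑ R ∈ KF, ite (R.submodule ≤ H) 1 0 := by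
    intro H _
    rw [Set.ncard_eq_toFinset_card']
    rw [show (Kset ∩ {z | z.submodule ≤ H}).toFinset
        = KF.filter (fun R => R.submodule ≤ H) by ext R; simp [hKFdef, Set.mem_toFinset]]
    rw [Finset.card_filter]
  have hstep1 : ∑ H ∈ A, (Kset ∩ {z | z.submodule ≤ H}).ncard = q ^ (n-1) * t := by
    rw [Finset.sum_congr rfl (fun H hH => hconst H ((hAmem H).1 hH).1 ((hAmem H).1 hH).2.2)]
    rw [Finset.sum_const, smul_eq_mul, hAcard]
  have hswap : ∑ H ∈ A, (Kset ∩ {z | z.submodule ≤ H}).ncard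
      = ∑ R ∈ KF, (A.filter (fun H => R.submodule ≤ H)).card := by
    rw [Finset.sum_congr rfl hterm, Finset.sum_comm]
    exact Finset.sum_congr rfl (fun R _ => (Finset.card_filter _ _).symm)
  have hcR : ∀ R ∈ KF, (A.filter (fun H => R.submodule ≤ H)).card
      = if R = y then q ^ (n-1) else if R.submodule ≤ l then 0 else q ^ (n-2) := by
    intro R _
    rcases eq_or_ne R y with rfl | hRy
    · rw [if_pos rfl, Finset.filter_true_of_mem (fun H hH => ((hAmem H).1 hH).2.1), hAcard]
    · rw [if_neg hRy]
      by_cases hRl : R.submodule ≤ l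
      · rw [if_pos hRl, Finset.card_eq_zero, Finset.filter_eq_empty_iff]
        intro H hH hRH
        obtain ⟨hfr, hyH, hPH⟩ := (hAmem H).1 hH
        have hsup : y.submodule ⊔ R.submodule = l :=
          proj_sup_eq (fun h => hRy h.symm) hyl hRl hl2
        have hPle : P.submodule ≤ y.submodule ⊔ R.submodule := hsup.symm ▸ hPl
        exact hPH (hPle.trans (sup_le hyH hRH))
      · rw [if_neg hRl]
        have hyR : y ≠ R := fun h => hRl (h ▸ hyl)
        have hpair := proj_pair_indep hyR
        have hrange : Submodule.span K (Set.range ![y.rep, R.rep])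
            = y.submodule ⊔ R.submodule := by
          rw [span_range_pair, ← Projectivization.submodule_eq, ← Projectivization.submodule_eq]
        have hw : P.rep ∉ Submodule.span K (Set.range ![y.rep, R.rep]) := by
          intro hmem
          rw [hrange] at hmem
          have hP : P.submodule ≤ y.submodule ⊔ R.submodule :=
            proj_submodule_le_iff.2 hmem
          have hle : l ≤ y.submodule ⊔ R.submodule := by
            rw [← proj_sup_eq hy hyl hPl hl2]
            exact sup_le le_sup_left hP
          have : l = y.submodule ⊔ R.submodule :=
            Submodule.eq_of_le_of_finrank_le hle (by rw [proj_sup_finrank hyR, hl2])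
          exact hRl (this ▸ le_sup_right)
        have htriple := indep3 hpair hw
        have h2 := hyperplane_count_two hV htriple
        rw [Set.ncard_eq_toFinset_card'] at h2
        rw [← h2]
        congr 1
        ext H
        simp only [Finset.mem_filter, hAmem, Set.mem_toFinset, Set.mem_setOf_eq,
          proj_submodule_le_iff]
        tauto
  have hfinal : ∑ R ∈ KF, (A.filter (fun H => R.submodule ≤ H)).card
      = (if y ∈ Kset then q ^ (n-1) else 0)
        + (Kset \ {z | z.submodule ≤ l}).ncard * q ^ (n-2) := by
    rw [Finset.sum_congr rfl hcR]
    rw [← Finset.sum_filter_add_sum_filter_not KF (fun R => R.submodule ≤ l)]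
    congr 1
    · have : ∀ R ∈ KF.filter (fun R => R.submodule ≤ l),
          (if R = y then q ^ (n-1) else if R.submodule ≤ l then 0 else q ^ (n-2))
            = if R = y then q ^ (n-1) else 0 := by
        intro R hR
        rcases eq_or_ne R y with rfl | hRy
        · simp
        · rw [if_neg hRy, if_neg hRy, if_pos (Finset.mem_filter.1 hR).2]
      rw [Finset.sum_congr rfl this, Finset.sum_ite_eq']
      by_cases hyK : y ∈ Kset
      · rw [if_pos (by simp [hKFdef, Set.mem_toFinset, hyK, hyl]), if_pos hyK]
      · rw [if_neg (by simp [hKFdef, Set.mem_toFinset, hyK, hyl]), if_neg hyK]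
    · have : ∀ R ∈ KF.filter (fun R => ¬ R.submodule ≤ l),
          (if R = y then q ^ (n-1) else if R.submodule ≤ l then 0 else q ^ (n-2))
            = q ^ (n-2) := by
        intro R hR
        have hRl := (Finset.mem_filter.1 hR).2
        have hRy : R ≠ y := fun h => hRl (h ▸ hyl)
        rw [if_neg hRy, if_neg hRl]
      rw [Finset.sum_congr rfl this, Finset.sum_const, smul_eq_mul]
      congr 1
      rw [Set.ncard_eq_toFinset_card']
      congr 1
      ext R
      simp [Set.mem_toFinset, hKFdef]
  rw [hswap, hfinal] at hstep1
  rw [mul_comm t]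
  exact hstep1.symm

end Key


/-- If every hyperplane of `PG(n,q)` not containing the point `P` meets
`K` in a fixed number `t` of points, then `K ∪ {P}` is a cone with vertex `P`: for
every `Q ∈ K ∪ {P}`, every point of the line `PQ` lies in `K ∪ {P}`. -/
theorem statement8 [Fintype F] (q n t : ℕ) (hq : Fintype.card F = q)
    (P : PGPoint F n) (K : Set (PGPoint F n))
    (hconst : ∀ W : Submodule F (Fin (n + 1) → F), finrank F W = n →
      ¬ P.submodule ≤ W → (K ∩ projSet F n W).ncard = t) :
    ∀ Q ∈ K ∪ {P}, ∀ x : PGPoint F n,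
      x.submodule ≤ P.submodule ⊔ Q.submodule → x ∈ K ∪ {P} := by
  classical
  subst hq
  intro Q hQ x hx
  by_cases hxP : x = P
  · exact Set.mem_union_right _ (by simp [hxP])
  by_cases hQP : Q = P
  · subst hQP
    rw [sup_idem] at hx
    have hxs : x.submodule = Q.submodule :=
      Submodule.eq_of_le_of_finrank_le hx
        (by rw [x.finrank_submodule, Q.finrank_submodule])
    exact absurd (Projectivization.submodule_injective hxs) hxP
  have hQK : Q ∈ K := by
    rcases hQ with h | h
    · exact h
    · exact absurd h hQP
  by_cases hxQ : x = Q
  · exact Set.mem_union_left _ (by rwa [hxQ])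
  left
  set l := P.submodule ⊔ Q.submodule with hl
  have hl2 : finrank F l = 2 := proj_sup_finrank (fun h => hQP h.symm)
  have hconst' : ∀ W : Submodule F (Fin (n+1) → F), finrank F W = n →
      ¬ P.submodule ≤ W → (K ∩ {z | z.submodule ≤ W}).ncard = t :=
    fun W h1 h2 => hconst W h1 h2
  have eq1 := key_count P Q K l le_sup_left le_sup_right hQP hl2 hconst'
  have eq2 := key_count P x K l le_sup_left hx hxP hl2 hconst'
  rw [if_pos hQK] at eq1
  by_contra hxK
  rw [if_neg hxK, zero_add] at eq2
  have hpos : 0 < Fintype.card F ^ (n - 1) := pow_pos Fintype.card_pos _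
  omega
end
end

section
/- Let V be an m-dimensional subspace of PG(n,q) and let K be a set of points of PG(n,q) such that there is a fixed number t with |K ∩ H| = t for every hyperplane H of PG(n,q) not containing V. Then K ∪ V is a cone with vertex V, i.e. for every point P ∈ V and every point Q ∈ K ∪ V, every point of the line PQ lies in K ∪ V. -/
open Module Set

section Aux
variable {k : Type*} [Field k] {V : Type*} [AddCommGroup V] [Module k V] [FiniteDimensional k V]

lemma exists_autom_map_eq {W1 W2 : Submodule k V} (h : finrank k W1 = finrank k W2) :
    ∃ e : V ≃ₗ[k] V, W1.map (e : V →ₗ[k] V) = W2 := by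
  obtain ⟨C1, hC1⟩ := Submodule.exists_isCompl W1
  obtain ⟨C2, hC2⟩ := Submodule.exists_isCompl W2
  have h1 := Submodule.finrank_add_eq_of_isCompl hC1
  have h2 := Submodule.finrank_add_eq_of_isCompl hC2
  have hc : finrank k C1 = finrank k C2 := by omega
  let e1 : W1 ≃ₗ[k] W2 := LinearEquiv.ofFinrankEq _ _ h
  let e2 : C1 ≃ₗ[k] C2 := LinearEquiv.ofFinrankEq _ _ hc
  refine ⟨(Submodule.prodEquivOfIsCompl _ _ hC1).symm.trans
      ((e1.prodCongr e2).trans (Submodule.prodEquivOfIsCompl _ _ hC2)), ?_⟩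
  apply Submodule.eq_of_le_of_finrank_eq
  · rintro _ ⟨w, hw, rfl⟩
    simp only [LinearEquiv.coe_coe, LinearEquiv.trans_apply]
    rw [show w = ((⟨w, hw⟩ : W1) : V) from rfl,
      Submodule.prodEquivOfIsCompl_symm_apply_left]
    have : (e1.prodCongr e2) ((⟨w, hw⟩ : W1), (0 : C1)) = (e1 ⟨w, hw⟩, (0 : C2)) := by
      simp [LinearEquiv.prodCongr_apply]
    rw [this, Submodule.coe_prodEquivOfIsCompl']
    simp
  · rw [LinearEquiv.finrank_map_eq, h]

lemma exists_hyperplane_avoid {W : Submodule k V} {v : V} (hv : v ∉ W) :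
    ∃ H : Submodule k V, finrank k H + 1 = finrank k V ∧ W ≤ H ∧ v ∉ H := by
  have hv0 : (Submodule.Quotient.mk v : V ⧸ W) ≠ 0 := by
    simpa [Submodule.Quotient.mk_eq_zero] using hv
  obtain ⟨φ, hφ⟩ : ∃ φ : Module.Dual k (V ⧸ W), φ (Submodule.Quotient.mk v) ≠ 0 := by
    by_contra hc; push_neg at hc
    exact hv0 ((Module.forall_dual_apply_eq_zero_iff k _).mp hc)
  set f := φ.comp W.mkQ with hf
  have hfv : f v ≠ 0 := by simpa [hf] using hφ
  refine ⟨LinearMap.ker f, ?_, ?_, ?_⟩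
  · have hr := LinearMap.finrank_range_add_finrank_ker f
    have hrange : finrank k (LinearMap.range f) = 1 := by
      have hle : finrank k (LinearMap.range f) ≤ 1 := by
        simpa using (LinearMap.range f).finrank_le
      have hpos : 0 < finrank k (LinearMap.range f) := by
        rw [Module.finrank_pos_iff]
        exact nontrivial_of_ne ⟨f v, ⟨v, rfl⟩⟩ 0 (by simpa [Subtype.ext_iff] using hfv)
      omega
    omega
  · intro w hw
    simp [hf, LinearMap.mem_ker, (Submodule.Quotient.mk_eq_zero W).mpr hw]
  · simpa [LinearMap.mem_ker] using hfv

lemma finrank_sup_eq_two {W1 W2 : Submodule k V} (h1 : finrank k W1 = 1)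
    (h2 : finrank k W2 = 1) (hne : W1 ≠ W2) : finrank k (W1 ⊔ W2 : Submodule k V) = 2 := by
  have hinf : W1 ⊓ W2 = ⊥ := by
    rcases lt_or_eq_of_le (inf_le_left : W1 ⊓ W2 ≤ W1) with hlt | heq
    · have := Submodule.finrank_lt_finrank_of_lt hlt
      rw [h1] at this
      rw [← Submodule.finrank_eq_zero]
      omega
    · exact absurd (Submodule.eq_of_le_of_finrank_eq (heq ▸ inf_le_right : W1 ≤ W2)
        (by rw [h1, h2])) hne
  have := Submodule.finrank_sup_add_finrank_inf_eq W1 W2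
  rw [hinf, h1, h2] at this
  simpa using this

open scoped Classical in
lemma card_hyp_filter_eq [Fintype (Submodule k V)] (d : ℕ) {W1 W2 : Submodule k V}
    (h : finrank k W1 = finrank k W2) :
    (Finset.univ.filter fun H : Submodule k V => finrank k H = d ∧ W1 ≤ H).card
      = (Finset.univ.filter fun H : Submodule k V => finrank k H = d ∧ W2 ≤ H).card := by
  classical
  obtain ⟨e, he⟩ := exists_autom_map_eq h
  apply Finset.card_bij' (fun H _ => H.map (e : V →ₗ[k] V))
    (fun H _ => H.map (e.symm : V →ₗ[k] V))
  · intro H _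
    rw [← Submodule.map_comp]; simp
  · intro H _
    rw [← Submodule.map_comp]; simp
  · intro H hH
    simp only [Finset.mem_filter, Finset.mem_univ, true_and] at hH ⊢
    refine ⟨by rw [LinearEquiv.finrank_map_eq]; exact hH.1, ?_⟩
    rw [← he]
    exact Submodule.map_mono hH.2
  · intro H hH
    simp only [Finset.mem_filter, Finset.mem_univ, true_and] at hH ⊢
    refine ⟨by rw [LinearEquiv.finrank_map_eq]; exact hH.1, ?_⟩
    have : W1 = W2.map (e.symm : V →ₗ[k] V) := by
      rw [← he, ← Submodule.map_comp]
      simp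
    rw [this]
    exact Submodule.map_mono hH.2

end Aux

noncomputable section

variable (F : Type) [Field F]

/-- If every hyperplane of `PG(n,q)` not containing the `m`-dimensional
subspace `V` meets `K` in a fixed number `t` of points, then `K ∪ V` is a cone with
vertex `V`: for every `P ∈ V` and every `Q ∈ K ∪ V`, every point of the line `PQ`
lies in `K ∪ V`. -/
theorem statement9 [Fintype F] (q n m t : ℕ) (hq : Fintype.card F = q)
    (Wv : Submodule F (Fin (n + 1) → F)) (hWv : finrank F Wv = m + 1)
    (K : Set (PGPoint F n))
    (hconst : ∀ W : Submodule F (Fin (n + 1) → F), finrank F W = n →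
      ¬ Wv ≤ W → (K ∩ projSet F n W).ncard = t) :
    ∀ P ∈ projSet F n Wv, ∀ Q ∈ K ∪ projSet F n Wv, ∀ x : PGPoint F n,
      x.submodule ≤ P.submodule ⊔ Q.submodule → x ∈ K ∪ projSet F n Wv := by
  classical
  have hdimV : finrank F (Fin (n + 1) → F) = n + 1 := by
    simp [Module.finrank_pi]
  haveI : Finite (Submodule F (Fin (n + 1) → F)) :=
    Finite.of_injective (fun W => (W : Set (Fin (n + 1) → F))) SetLike.coe_injective
  haveI := Fintype.ofFinite (Submodule F (Fin (n + 1) → F))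
  haveI : Finite (PGPoint F n) := Finite.of_surjective
    (fun v : {w : Fin (n + 1) → F // w ≠ 0} => Projectivization.mk F v.1 v.2)
    (fun p => ⟨⟨p.rep, p.rep_nonzero⟩, p.mk_rep⟩)
  haveI := Fintype.ofFinite (PGPoint F n)
  intro P hP Q hQ x hx
  have hPle : P.submodule ≤ Wv := hP
  by_cases hQV : Q.submodule ≤ Wv
  · exact Or.inr (le_trans hx (sup_le hPle hQV))
  have hQK : Q ∈ K := hQ.resolve_right hQV
  by_cases hxV : x.submodule ≤ Wv
  · exact Or.inr hxV
  by_cases hxQ : x = Q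
  · exact Or.inl (hxQ ▸ hQK)
  left
  by_contra hxK
  -- basic membership facts
  have hxrep : x.rep ∈ x.submodule := by
    rw [Projectivization.submodule_eq]; exact Submodule.mem_span_singleton_self _
  have hQrep : Q.rep ∈ Q.submodule := by
    rw [Projectivization.submodule_eq]; exact Submodule.mem_span_singleton_self _
  have hPrep : P.rep ∈ P.submodule := by
    rw [Projectivization.submodule_eq]; exact Submodule.mem_span_singleton_self _
  have hfx : finrank F x.submodule = 1 := x.finrank_submodule
  have hfQ : finrank F Q.submodule = 1 := Q.finrank_submodule
  have hxQsub : x.submodule ≠ Q.submodule :=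
    fun h => hxQ (Projectivization.submodule_injective h)
  -- key subspace equality
  have hU : x.submodule ⊔ Wv = Q.submodule ⊔ Wv := by
    have hxPQ : x.rep ∈ P.submodule ⊔ Q.submodule := hx hxrep
    rw [Submodule.mem_sup] at hxPQ
    obtain ⟨u, hu, v, hv, huv⟩ := hxPQ
    rw [Projectivization.submodule_eq, Submodule.mem_span_singleton] at hu hv
    obtain ⟨a, rfl⟩ := hu
    obtain ⟨b, rfl⟩ := hv
    by_cases hb : b = 0
    · exfalso
      apply hxV
      rw [Projectivization.submodule_eq, Submodule.span_le, Set.singleton_subset_iff]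
      subst hb
      simp only [zero_smul, add_zero] at huv
      rw [← huv]
      exact Wv.smul_mem a (hPle hPrep)
    · apply le_antisymm
      · exact sup_le (le_trans hx (sup_le (le_trans hPle le_sup_right) le_sup_left)) le_sup_right
      · refine sup_le ?_ le_sup_right
        rw [Projectivization.submodule_eq Q, Submodule.span_le, Set.singleton_subset_iff]
        have hQr : Q.rep = b⁻¹ • (x.rep - a • P.rep) := by
          rw [← huv, add_sub_cancel_left, smul_smul, inv_mul_cancel₀ hb, one_smul]
        rw [hQr]
        refine Submodule.smul_mem _ _ (Submodule.sub_mem _ ?_ ?_)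
        · exact (le_sup_left : x.submodule ≤ x.submodule ⊔ Wv) hxrep
        · exact (le_sup_right : Wv ≤ x.submodule ⊔ Wv) (Wv.smul_mem a (hPle hPrep))
  -- the hyperplane counting sets
  set A : Submodule F (Fin (n + 1) → F) → Finset (Submodule F (Fin (n + 1) → F)) :=
    fun W => Finset.univ.filter (fun H => finrank F H = n ∧ W ≤ H) with hA
  set Nf : Submodule F (Fin (n + 1) → F) → Finset (Submodule F (Fin (n + 1) → F)) :=
    fun W => Finset.univ.filter (fun H => finrank F H = n ∧ W ≤ H ∧ ¬ Wv ≤ H) with hN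
  have hsub : ∀ W, A (W ⊔ Wv) ⊆ A W := by
    intro W H hH
    simp only [hA, Finset.mem_filter, Finset.mem_univ, true_and, sup_le_iff] at hH ⊢
    exact ⟨hH.1, hH.2.1⟩
  have hNcard : ∀ W, (Nf W).card = (A W).card - (A (W ⊔ Wv)).card := by
    intro W
    rw [← Finset.card_sdiff_of_subset (hsub W)]
    congr 1
    ext H
    simp only [hA, hN, Finset.mem_sdiff, Finset.mem_filter, Finset.mem_univ, true_and, sup_le_iff]
    tauto
  have hAeq : ∀ W1 W2 : Submodule F (Fin (n + 1) → F), finrank F W1 = finrank F W2 →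
      (A W1).card = (A W2).card := by
    intro W1 W2 h
    simp only [hA]
    exact card_hyp_filter_eq n h
  -- claim 1 : sum over hyperplanes through R of |K ∩ H| = t * count
  have claim1 : ∀ R : PGPoint F n,
      ∑ H ∈ Nf R.submodule, (K ∩ projSet F n H).ncard = t * (Nf R.submodule).card := by
    intro R
    rw [Finset.sum_congr rfl (g := fun _ => t) (fun H hH => by
      simp only [hN, Finset.mem_filter] at hH
      exact hconst H hH.2.1 hH.2.2.2), Finset.sum_const, smul_eq_mul, mul_comm]
  -- claim 2 : double counting
  have claim2 : ∀ R : PGPoint F n,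
      ∑ H ∈ Nf R.submodule, (K ∩ projSet F n H).ncard
        = ∑ y ∈ K.toFinset, (Nf (R.submodule ⊔ y.submodule)).card := by
    intro R
    have step1 : ∀ H : Submodule F (Fin (n + 1) → F), (K ∩ projSet F n H).ncard
        = ∑ y ∈ K.toFinset, if y.submodule ≤ H then 1 else 0 := by
      intro H
      rw [Set.ncard_eq_toFinset_card', Set.toFinset_inter, ← Finset.filter_mem_eq_inter,
        Finset.card_filter]
      apply Finset.sum_congr rfl
      intro y _
      congr 1
      simp [projSet, Set.mem_toFinset]
      exact Set.mem_toFinset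
    calc ∑ H ∈ Nf R.submodule, (K ∩ projSet F n H).ncard
        = ∑ H ∈ Nf R.submodule, ∑ y ∈ K.toFinset, if y.submodule ≤ H then 1 else 0 :=
          Finset.sum_congr rfl (fun H _ => step1 H)
      _ = ∑ y ∈ K.toFinset, ∑ H ∈ Nf R.submodule, if y.submodule ≤ H then 1 else 0 :=
          Finset.sum_comm
      _ = ∑ y ∈ K.toFinset, (Nf (R.submodule ⊔ y.submodule)).card := by
          apply Finset.sum_congr rfl
          intro y _
          rw [← Finset.card_filter]
          congr 1
          ext H
          simp only [hN, Finset.mem_filter, Finset.mem_univ, true_and, sup_le_iff]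
          tauto
  -- counts through x and through Q agree
  have hTcard : (Nf x.submodule).card = (Nf Q.submodule).card := by
    rw [hNcard, hNcard, hAeq x.submodule Q.submodule (by rw [hfx, hfQ]), hU]
  have hEq : ∑ y ∈ K.toFinset, (Nf (x.submodule ⊔ y.submodule)).card
      = ∑ y ∈ K.toFinset, (Nf (Q.submodule ⊔ y.submodule)).card := by
    rw [← claim2 x, ← claim2 Q, claim1 x, claim1 Q, hTcard]
  -- the strict inequality at y = Q
  have hxrepQ : x.rep ∉ Q.submodule := by
    intro hmem
    apply hxQsub
    apply Submodule.eq_of_le_of_finrank_eq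
    · rw [Projectivization.submodule_eq, Submodule.span_le, Set.singleton_subset_iff]
      exact hmem
    · rw [hfx, hfQ]
  obtain ⟨H0, hH0rank, hH0Q, hH0x⟩ := exists_hyperplane_avoid hxrepQ
  have hH0rank' : finrank F H0 = n := by rw [hdimV] at hH0rank; omega
  have hH0Wv : ¬ Wv ≤ H0 := by
    intro h
    apply hH0x
    have : x.submodule ≤ H0 := le_trans (le_trans le_sup_left hU.le) (sup_le hH0Q h)
    exact this hxrep
  have hH0xsub : ¬ x.submodule ≤ H0 := fun h => hH0x (h hxrep)
  have hstrict : (Nf (x.submodule ⊔ Q.submodule)).card < (Nf (Q.submodule ⊔ Q.submodule)).card := by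
    rw [sup_idem]
    apply Finset.card_lt_card
    rw [Finset.ssubset_iff_of_subset]
    · refine ⟨H0, ?_, ?_⟩
      · simp only [hN, Finset.mem_filter, Finset.mem_univ, true_and]
        exact ⟨hH0rank', hH0Q, hH0Wv⟩
      · simp only [hN, Finset.mem_filter, Finset.mem_univ, true_and, sup_le_iff]
        tauto
    · intro H hH
      simp only [hN, Finset.mem_filter, Finset.mem_univ, true_and, sup_le_iff] at hH ⊢
      tauto
  have hlt : ∑ y ∈ K.toFinset, (Nf (x.submodule ⊔ y.submodule)).card
      < ∑ y ∈ K.toFinset, (Nf (Q.submodule ⊔ y.submodule)).card := by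
    apply Finset.sum_lt_sum
    · intro y hy
      by_cases hyQ : y = Q
      · subst hyQ; exact hstrict.le
      · have hyx : y ≠ x := fun h => hxK (h ▸ Set.mem_toFinset.mp hy)
        have hysub : finrank F y.submodule = 1 := y.finrank_submodule
        have hne1 : x.submodule ≠ y.submodule :=
          fun h => hyx (Projectivization.submodule_injective h.symm)
        have hne2 : Q.submodule ≠ y.submodule :=
          fun h => hyQ (Projectivization.submodule_injective h.symm)
        have h2a : finrank F (x.submodule ⊔ y.submodule : Submodule F _) = 2 :=
          finrank_sup_eq_two hfx hysub hne1
        have h2b : finrank F (Q.submodule ⊔ y.submodule : Submodule F _) = 2 :=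
          finrank_sup_eq_two hfQ hysub hne2
        have hsupeq : (x.submodule ⊔ y.submodule) ⊔ Wv = (Q.submodule ⊔ y.submodule) ⊔ Wv := by
          rw [sup_right_comm, hU, sup_right_comm]
        apply le_of_eq
        rw [hNcard, hNcard, hAeq _ _ (h2a.trans h2b.symm), hsupeq]
    · exact ⟨Q, Set.mem_toFinset.mpr hQK, hstrict⟩
  exact absurd hEq (ne_of_lt hlt)
end
end

section
/- In PG(3,q), let K be a point set of type (1, q+2, 2q+1)_2 with k points. Then (q+1) divides k, and q divides k−1 or q divides k−2. -/
open Module Set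

noncomputable section

variable (F : Type) [Field F]

/-! ### Auxiliary counting lemmas -/

section Aux

variable {F}
variable [Fintype F]

open Finset

set_option linter.unusedSectionVars false

/-- The number of nonzero vectors in a submodule of a finite module. -/
lemma aux_card_nonzero {M : Type} [AddCommGroup M] [Module F M] [Fintype M] [DecidableEq M]
    (Φ : Submodule F M) [DecidablePred (· ∈ Φ)] :
    (Finset.univ.filter (fun v : M => v ∈ Φ ∧ v ≠ 0)).card
      = Fintype.card F ^ (finrank F Φ) - 1 := by
  have h0 : Finset.univ.filter (fun v : M => v ∈ Φ ∧ v ≠ 0)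
      = (Finset.univ.filter (fun v : M => v ∈ Φ)).erase 0 := by
    ext v; simp [Finset.mem_erase, and_comm]
  have h1 : (Finset.univ.filter (fun v : M => v ∈ Φ)).card = Fintype.card Φ :=
    (Fintype.card_subtype _).symm
  rw [h0, Finset.card_erase_of_mem (by simp [Φ.zero_mem]), h1,
    card_eq_pow_finrank (K := F) (V := Φ)]

/-- The number of `1`-dimensional subspaces contained in a subspace `A`,
multiplied by `q - 1`, is `q ^ dim A - 1`. -/
lemma aux_count_lines {M : Type} [AddCommGroup M] [Module F M] [Fintype M]
    (A : Submodule F M) :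
    Nat.card {Φ : Submodule F M // finrank F Φ = 1 ∧ Φ ≤ A} * (Fintype.card F - 1)
      = Fintype.card F ^ (finrank F A) - 1 := by
  classical
  haveI : Fintype (Submodule F M) := Fintype.ofFinite _
  set t : Finset (Submodule F M) := univ.filter (fun Φ => finrank F Φ = 1 ∧ Φ ≤ A) with ht
  have hcard : Nat.card {Φ : Submodule F M // finrank F Φ = 1 ∧ Φ ≤ A} = t.card := by
    rw [Nat.card_eq_fintype_card, Fintype.card_subtype]
  set s : Finset M := univ.filter (fun v => v ∈ A ∧ v ≠ 0) with hs
  have hmap : ∀ v ∈ s, Submodule.span F {v} ∈ t := by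
    intro v hv
    simp only [hs, mem_filter, Finset.mem_univ, true_and] at hv
    simp only [ht, mem_filter, Finset.mem_univ, true_and]
    exact ⟨finrank_span_singleton hv.2, (Submodule.span_singleton_le_iff_mem _ _).2 hv.1⟩
  have := Finset.card_eq_sum_card_fiberwise hmap
  have hfib : ∀ Φ ∈ t, (s.filter (fun v => Submodule.span F {v} = Φ)).card
      = Fintype.card F - 1 := by
    intro Φ hΦ
    simp only [ht, mem_filter, Finset.mem_univ, true_and] at hΦ
    have : s.filter (fun v => Submodule.span F {v} = Φ)
        = univ.filter (fun v : M => v ∈ Φ ∧ v ≠ 0) := by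
      ext v
      simp only [hs, mem_filter, Finset.mem_univ, true_and, and_assoc]
      constructor
      · rintro ⟨hA, hv0, rfl⟩
        exact ⟨Submodule.mem_span_singleton_self v, hv0⟩
      · rintro ⟨hvΦ, hv0⟩
        refine ⟨hΦ.2 hvΦ, hv0, ?_⟩
        apply Submodule.eq_of_le_of_finrank_le ((Submodule.span_singleton_le_iff_mem _ _).2 hvΦ)
        rw [finrank_span_singleton hv0, hΦ.1]
    rw [this, aux_card_nonzero, hΦ.1, pow_one]
  rw [hcard]
  have hsum : s.card = t.card * (Fintype.card F - 1) := by
    rw [this, Finset.sum_congr rfl hfib, Finset.sum_const, smul_eq_mul]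
  have hscard : s.card = Fintype.card F ^ (finrank F A) - 1 := aux_card_nonzero A
  omega

/-- Abbreviation for the ambient space. -/
abbrev V4 (F : Type) [Field F] := Fin 4 → F

lemma aux_finrank_ann (W : Submodule F (V4 F)) :
    finrank F W.dualAnnihilator = 4 - finrank F W := by
  have h := Subspace.finrank_add_finrank_dualCoannihilator_eq (W := W.dualAnnihilator)
  rw [Subspace.dualAnnihilator_dualCoannihilator_eq] at h
  have h4 : finrank F (V4 F) = 4 := by simp
  rw [h4] at h
  have h5 := Submodule.finrank_le (R := F) W
  rw [h4] at h5
  omega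

/-- The number of hyperplanes of `PG(3,q)` containing a fixed subspace `U`,
multiplied by `q - 1`, equals `q ^ (4 - dim U) - 1`. -/
lemma aux_count_hyp (U : Submodule F (V4 F)) :
    Nat.card {W : Submodule F (V4 F) // finrank F W = 3 ∧ U ≤ W} * (Fintype.card F - 1)
      = Fintype.card F ^ (4 - finrank F U) - 1 := by
  haveI : Finite (Module.Dual F (V4 F)) :=
    Finite.of_injective _ (DFunLike.coe_injective (F := Module.Dual F (V4 F)))
  haveI : Fintype (Module.Dual F (V4 F)) := Fintype.ofFinite _
  have e : {W : Submodule F (V4 F) // finrank F W = 3 ∧ U ≤ W}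
      ≃ {Φ : Submodule F (Module.Dual F (V4 F)) // finrank F Φ = 1 ∧ Φ ≤ U.dualAnnihilator} := by
    refine ⟨fun W => ⟨W.1.dualAnnihilator, ?_, ?_⟩, fun Φ => ⟨Φ.1.dualCoannihilator, ?_, ?_⟩, ?_, ?_⟩
    · rw [aux_finrank_ann, W.2.1]
    · exact Subspace.dualAnnihilator_le_dualAnnihilator_iff.mpr W.2.2
    · have h := Subspace.finrank_add_finrank_dualCoannihilator_eq (W := Φ.1)
      have h4 : finrank F (V4 F) = 4 := by simp
      rw [h4, Φ.2.1] at h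
      omega
    · intro v hv
      rw [Submodule.mem_dualCoannihilator]
      intro f hf
      exact (Submodule.mem_dualAnnihilator f).mp (Φ.2.2 hf) v hv
    · intro W
      exact Subtype.ext Subspace.dualAnnihilator_dualCoannihilator_eq
    · rintro ⟨Φ, h1, h2⟩
      refine Subtype.ext ?_
      dsimp only
      refine (Submodule.eq_of_le_of_finrank_le ?_ ?_).symm
      · intro f hf
        rw [Submodule.mem_dualAnnihilator]
        intro v hv
        rw [Submodule.mem_dualCoannihilator] at hv
        exact hv f hf
      · rw [aux_finrank_ann, h1]
        have h := Subspace.finrank_add_finrank_dualCoannihilator_eq (W := Φ)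
        have h4 : finrank F (V4 F) = 4 := by simp
        rw [h4, h1] at h
        omega
  rw [Nat.card_congr e, aux_count_lines, aux_finrank_ann]

/-- Evaluated version of `aux_count_hyp`. -/
lemma aux_count_hyp_eval (U : Submodule F (V4 F)) (c : ℕ)
    (h : c * (Fintype.card F - 1) = Fintype.card F ^ (4 - finrank F U) - 1) :
    Nat.card {W : Submodule F (V4 F) // finrank F W = 3 ∧ U ≤ W} = c := by
  have hq2 : 2 ≤ Fintype.card F := Fintype.one_lt_card
  have := (aux_count_hyp U).trans h.symm
  exact Nat.eq_of_mul_eq_mul_right (by omega) this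

end Aux

/-- In `PG(3,q)`, if `K` is of type `(1, q+2, 2q+1)_2` with `k` points,
then `q+1` divides `k`, and `q` divides `k-1` or `q` divides `k-2`. -/
theorem statement13 [Fintype F] (q : ℕ) (hq : Fintype.card F = q)
    (K : Set (PGPoint F 3)) (hK : IsType3 F 3 K 1 (q + 2) (2 * q + 1)) :
    (q + 1) ∣ K.ncard ∧
      ((q : ℤ) ∣ (K.ncard : ℤ) - 1 ∨ (q : ℤ) ∣ (K.ncard : ℤ) - 2) := by
  classical
  subst hq
  set q := Fintype.card F with hqdef
  haveI : Finite (PGPoint F 3) := Quotient.finite _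
  haveI : Fintype (PGPoint F 3) := Fintype.ofFinite _
  haveI : Fintype (Submodule F (V4 F)) := Fintype.ofFinite _
  have hq2 : 2 ≤ q := Fintype.one_lt_card
  obtain ⟨m, hm⟩ : ∃ m, q = m + 1 := ⟨q - 1, by omega⟩
  have hcount : ∀ U : Submodule F (V4 F), ∀ c : ℕ,
      c * (q - 1) = q ^ (4 - finrank F U) - 1 →
      (Finset.univ.filter (fun W : Submodule F (V4 F) => finrank F W = 3 ∧ U ≤ W)).card = c := by
    intro U c h
    rw [← Fintype.card_subtype, ← Nat.card_eq_fintype_card]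
    exact aux_count_hyp_eval U c h
  have hcount0 :
      (Finset.univ.filter (fun W : Submodule F (V4 F) => finrank F W = 3)).card
        = q^3 + q^2 + q + 1 := by
    have h := hcount ⊥ (q^3 + q^2 + q + 1) ?_
    · rw [← h]
      congr 1
      apply Finset.filter_congr
      intro W _
      simp
    · rw [finrank_bot]
      rw [hm]
      simp only [Nat.add_sub_cancel]
      exact (Nat.sub_eq_of_eq_add (by ring)).symm
  have hcount1 : ∀ x : PGPoint F 3,
      (Finset.univ.filter
        (fun W : Submodule F (V4 F) => finrank F W = 3 ∧ x.submodule ≤ W)).card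
        = q^2 + q + 1 := by
    intro x
    apply hcount
    rw [x.finrank_submodule, hm]
    simp only [Nat.add_sub_cancel]
    exact (Nat.sub_eq_of_eq_add (by ring)).symm
  have hcount2 : ∀ x y : PGPoint F 3, x ≠ y →
      (Finset.univ.filter
        (fun W : Submodule F (V4 F) => finrank F W = 3 ∧ x.submodule ⊔ y.submodule ≤ W)).card
        = q + 1 := by
    intro x y hne
    have hxy : x.submodule ≠ y.submodule := fun h => hne (Projectivization.submodule_injective h)
    have hinf : x.submodule ⊓ y.submodule = ⊥ := by
      by_contra hbot
      obtain ⟨v, hv, hv0⟩ := Submodule.exists_mem_ne_zero_of_ne_bot hbot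
      have hx : Submodule.span F {v} = x.submodule := by
        apply Submodule.eq_of_le_of_finrank_le
          ((Submodule.span_singleton_le_iff_mem _ _).2 hv.1)
        rw [finrank_span_singleton hv0, x.finrank_submodule]
      have hy : Submodule.span F {v} = y.submodule := by
        apply Submodule.eq_of_le_of_finrank_le
          ((Submodule.span_singleton_le_iff_mem _ _).2 hv.2)
        rw [finrank_span_singleton hv0, y.finrank_submodule]
      exact hxy (hx ▸ hy)
    have hsup : finrank F ↥(x.submodule ⊔ y.submodule) = 2 := by
      have h := Submodule.finrank_sup_add_finrank_inf_eq x.submodule y.submodule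
      rw [hinf, finrank_bot, x.finrank_submodule, y.finrank_submodule] at h
      omega
    apply hcount
    rw [hsup, hm]
    simp only [Nat.add_sub_cancel]
    exact (Nat.sub_eq_of_eq_add (by ring)).symm
  -- Finset versions of `K` and of plane sections
  set Kfin : Finset (PGPoint F 3) := K.toFinset with hKfin
  set k : ℕ := Kfin.card with hkdef
  have hncard : K.ncard = k := Set.ncard_eq_toFinset_card' K
  set f : Submodule F (V4 F) → ℕ :=
    fun W => (Kfin.filter (fun x => x.submodule ≤ W)).card with hf
  have hfW : ∀ W : Submodule F (V4 F), (K ∩ projSet F 3 W).ncard = f W := by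
    intro W
    rw [Set.ncard_eq_toFinset_card']
    congr 1
    ext x
    simp [projSet, hKfin]
    exact Set.mem_toFinset
  set Pfin : Finset (Submodule F (V4 F)) :=
    Finset.univ.filter (fun W => finrank F W = 3) with hPfin
  -- Equation E1 : double counting point-plane incidences
  have E1 : ∑ W ∈ Pfin, f W = k * (q^2 + q + 1) := by
    set I : Finset (PGPoint F 3 × Submodule F (V4 F)) :=
      Finset.univ.filter
        (fun p => p.1 ∈ Kfin ∧ finrank F p.2 = 3 ∧ p.1.submodule ≤ p.2) with hI
    have ha : I.card = ∑ W ∈ Pfin, f W := by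
      rw [Finset.card_eq_sum_card_fiberwise (f := Prod.snd) (t := Pfin) ?_]
      · apply Finset.sum_congr rfl
        intro W hW
        simp only [hPfin, Finset.mem_filter, Finset.mem_univ, true_and] at hW
        have himg : I.filter (fun p => p.2 = W)
            = (Kfin.filter (fun x => x.submodule ≤ W)).image (fun x => (x, W)) := by
          ext p
          obtain ⟨a, b⟩ := p
          simp only [hI, Finset.mem_filter, Finset.mem_univ, true_and, Finset.mem_image,
            Prod.mk.injEq]
          constructor
          · rintro ⟨⟨ha1, hb3, hab⟩, rfl⟩
            exact ⟨a, ⟨ha1, hab⟩, rfl, rfl⟩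
          · rintro ⟨x, ⟨hx, hxW⟩, rfl, rfl⟩
            exact ⟨⟨hx, hW, hxW⟩, rfl⟩
        rw [himg, Finset.card_image_of_injective _ (by intro a b hab; simpa using hab)]
      · intro p hp
        simp only [hI, Finset.mem_filter, Finset.mem_univ, true_and] at hp
        simp only [hPfin, Finset.mem_filter, Finset.mem_univ, true_and]
        exact Finset.mem_coe.mpr (Finset.mem_filter.mpr ⟨Finset.mem_univ _, (Finset.mem_filter.mp (show p ∈ I from hp)).2.2.1⟩)
    have hb : I.card = ∑ x ∈ Kfin, (q^2 + q + 1) := by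
      rw [Finset.card_eq_sum_card_fiberwise (f := Prod.fst) (t := Kfin) ?_]
      · apply Finset.sum_congr rfl
        intro x hx
        have himg : I.filter (fun p => p.1 = x)
            = (Finset.univ.filter
                (fun W : Submodule F (V4 F) => finrank F W = 3 ∧ x.submodule ≤ W)).image
                (fun W => (x, W)) := by
          ext p
          obtain ⟨a, b⟩ := p
          simp only [hI, Finset.mem_filter, Finset.mem_univ, true_and, Finset.mem_image,
            Prod.mk.injEq]
          constructor
          · rintro ⟨⟨ha1, hb3, hab⟩, rfl⟩
            exact ⟨b, ⟨hb3, hab⟩, rfl, rfl⟩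
          · rintro ⟨w, ⟨h3, hw⟩, rfl, rfl⟩
            exact ⟨⟨hx, h3, hw⟩, rfl⟩
        rw [himg, Finset.card_image_of_injective _ (by intro a b hab; simpa using hab),
          hcount1 x]
      · intro p hp
        simp only [hI, Finset.mem_filter, Finset.mem_univ, true_and] at hp
        exact (Finset.mem_filter.mp (show p ∈ I from hp)).2.1
    rw [← ha, hb, Finset.sum_const, smul_eq_mul]
  -- Equation E2 : double counting (ordered pairs of distinct points, plane)
  have E2 : ∑ W ∈ Pfin, (f W * f W - f W) = (k * k - k) * (q + 1) := by
    set J : Finset ((PGPoint F 3 × PGPoint F 3) × Submodule F (V4 F)) :=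
      Finset.univ.filter
        (fun p => p.1 ∈ Kfin.offDiag ∧ finrank F p.2 = 3 ∧
          p.1.1.submodule ≤ p.2 ∧ p.1.2.submodule ≤ p.2) with hJ
    have ha : J.card = ∑ W ∈ Pfin, (f W * f W - f W) := by
      rw [Finset.card_eq_sum_card_fiberwise (f := Prod.snd) (t := Pfin) ?_]
      · apply Finset.sum_congr rfl
        intro W hW
        simp only [hPfin, Finset.mem_filter, Finset.mem_univ, true_and] at hW
        have himg : J.filter (fun p => p.2 = W)
            = ((Kfin.filter (fun x => x.submodule ≤ W)).offDiag).image
                (fun xy => (xy, W)) := by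
          ext p
          obtain ⟨⟨a, b⟩, c⟩ := p
          simp only [hJ, Finset.mem_filter, Finset.mem_univ, true_and, Finset.mem_image,
            Finset.mem_offDiag, Prod.mk.injEq]
          constructor
          · rintro ⟨⟨⟨haK, hbK, hab⟩, h3, hac, hbc⟩, hcW⟩
            subst hcW
            exact ⟨(a, b), ⟨⟨haK, hac⟩, ⟨hbK, hbc⟩, hab⟩, rfl, rfl⟩
          · rintro ⟨xy, ⟨⟨hxK, hxW⟩, ⟨hyK, hyW⟩, hxy⟩, hxyeq, hWc⟩
            subst hxyeq
            subst hWc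
            exact ⟨⟨⟨hxK, hyK, hxy⟩, hW, hxW, hyW⟩, rfl⟩
        rw [himg, Finset.card_image_of_injective _ (by intro a b hab; simpa using hab),
          Finset.offDiag_card]
      · intro p hp
        simp only [hJ, Finset.mem_filter, Finset.mem_univ, true_and] at hp
        simp only [hPfin, Finset.mem_filter, Finset.mem_univ, true_and]
        exact Finset.mem_coe.mpr (Finset.mem_filter.mpr ⟨Finset.mem_univ _, (Finset.mem_filter.mp (show p ∈ J from hp)).2.2.1⟩)
    have hb : J.card = ∑ xy ∈ Kfin.offDiag, (q + 1) := by
      rw [Finset.card_eq_sum_card_fiberwise (f := Prod.fst) (t := Kfin.offDiag) ?_]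
      · apply Finset.sum_congr rfl
        intro xy hxy
        obtain ⟨x, y⟩ := xy
        rw [Finset.mem_offDiag] at hxy
        have himg : J.filter (fun p => p.1 = (x, y))
            = (Finset.univ.filter
                (fun W : Submodule F (V4 F) =>
                  finrank F W = 3 ∧ x.submodule ⊔ y.submodule ≤ W)).image
                (fun W => ((x, y), W)) := by
          ext p
          obtain ⟨⟨a, b⟩, c⟩ := p
          simp only [hJ, Finset.mem_filter, Finset.mem_univ, true_and, Finset.mem_image,
            Finset.mem_offDiag, Prod.mk.injEq]
          constructor
          · rintro ⟨⟨⟨haK, hbK, hab⟩, h3, hac, hbc⟩, rfl, rfl⟩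
            exact ⟨c, ⟨h3, sup_le hac hbc⟩, ⟨rfl, rfl⟩, rfl⟩
          · rintro ⟨w, ⟨h3, hw⟩, ⟨rfl, rfl⟩, rfl⟩
            exact ⟨⟨⟨hxy.1, hxy.2.1, hxy.2.2⟩, h3,
              le_trans le_sup_left hw, le_trans le_sup_right hw⟩, rfl, rfl⟩
        rw [himg, Finset.card_image_of_injective _ (by intro a b hab; simpa using hab),
          hcount2 x y hxy.2.2]
      · intro p hp
        simp only [hJ, Finset.mem_filter, Finset.mem_univ, true_and] at hp
        exact (Finset.mem_filter.mp (show p ∈ J from hp)).2.1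
    rw [← ha, hb, Finset.sum_const, smul_eq_mul, Finset.offDiag_card]
  -- split the planes into the three types
  set T1 : Finset (Submodule F (V4 F)) := Pfin.filter (fun W => f W = 1) with hT1
  set Tb : Finset (Submodule F (V4 F)) := Pfin.filter (fun W => f W = q + 2) with hTb
  set Tc : Finset (Submodule F (V4 F)) := Pfin.filter (fun W => f W = 2 * q + 1) with hTc
  set t1 : ℕ := T1.card with ht1
  set tb : ℕ := Tb.card with htb
  set tc : ℕ := Tc.card with htc
  have hval : ∀ W ∈ Pfin, f W = 1 ∨ f W = q + 2 ∨ f W = 2 * q + 1 := by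
    intro W hW
    simp only [hPfin, Finset.mem_filter, Finset.mem_univ, true_and] at hW
    have := hK.1 W hW
    rwa [hfW W] at this
  have hsplit : ∀ g : Submodule F (V4 F) → ℕ,
      ∑ W ∈ Pfin, g W = ∑ W ∈ T1, g W + (∑ W ∈ Tb, g W + ∑ W ∈ Tc, g W) := by
    intro g
    rw [hT1, hTb, hTc]
    rw [← Finset.sum_filter_add_sum_filter_not Pfin (fun W => f W = 1) g]
    congr 1
    rw [← Finset.sum_filter_add_sum_filter_not (Pfin.filter (fun W => ¬ f W = 1))
      (fun W => f W = q + 2) g]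
    congr 1
    · apply Finset.sum_congr _ (fun _ _ => rfl)
      rw [Finset.filter_filter]
      ext W
      simp only [Finset.mem_filter]
      constructor
      · rintro ⟨hW, _, h2⟩
        exact ⟨hW, h2⟩
      · rintro ⟨hW, h2⟩
        exact ⟨hW, by omega, h2⟩
    · apply Finset.sum_congr _ (fun _ _ => rfl)
      rw [Finset.filter_filter]
      ext W
      simp only [Finset.mem_filter]
      constructor
      · rintro ⟨hW, h1, h2⟩
        rcases hval W hW with h | h | h
        · omega
        · omega
        · exact ⟨hW, h⟩
      · rintro ⟨hW, h⟩
        exact ⟨hW, by omega, by omega⟩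
  have hT1f : ∀ W ∈ T1, f W = 1 := fun W hW => (Finset.mem_filter.mp hW).2
  have hTbf : ∀ W ∈ Tb, f W = q + 2 := fun W hW => (Finset.mem_filter.mp hW).2
  have hTcf : ∀ W ∈ Tc, f W = 2 * q + 1 := fun W hW => (Finset.mem_filter.mp hW).2
  -- the three equations
  have eq0 : t1 + (tb + tc) = q^3 + q^2 + q + 1 := by
    have h := hsplit (fun _ => 1)
    simp only [Finset.sum_const, smul_eq_mul, mul_one] at h
    rw [← hcount0]
    exact h.symm
  have eq1 : t1 * 1 + (tb * (q + 2) + tc * (2 * q + 1)) = k * (q^2 + q + 1) := by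
    have h := hsplit f
    rw [E1] at h
    rw [Finset.sum_congr rfl hT1f, Finset.sum_congr rfl hTbf, Finset.sum_congr rfl hTcf] at h
    simp only [Finset.sum_const, smul_eq_mul] at h
    exact h.symm
  have eq2 : t1 * (1 * 1 - 1) + (tb * ((q + 2) * (q + 2) - (q + 2))
      + tc * ((2 * q + 1) * (2 * q + 1) - (2 * q + 1))) = (k * k - k) * (q + 1) := by
    have hsT1 : ∑ W ∈ T1, (f W * f W - f W) = t1 * (1 * 1 - 1) := by
      have hcongr : ∀ W ∈ T1, f W * f W - f W = 1 * 1 - 1 := fun W hW => by rw [hT1f W hW]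
      rw [Finset.sum_congr rfl hcongr, Finset.sum_const, smul_eq_mul]
    have hsTb : ∑ W ∈ Tb, (f W * f W - f W) = tb * ((q + 2) * (q + 2) - (q + 2)) := by
      have hcongr : ∀ W ∈ Tb, f W * f W - f W = (q + 2) * (q + 2) - (q + 2) :=
        fun W hW => by rw [hTbf W hW]
      rw [Finset.sum_congr rfl hcongr, Finset.sum_const, smul_eq_mul]
    have hsTc : ∑ W ∈ Tc, (f W * f W - f W)
        = tc * ((2 * q + 1) * (2 * q + 1) - (2 * q + 1)) := by
      have hcongr : ∀ W ∈ Tc, f W * f W - f W = (2 * q + 1) * (2 * q + 1) - (2 * q + 1) :=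
        fun W hW => by rw [hTcf W hW]
      rw [Finset.sum_congr rfl hcongr, Finset.sum_const, smul_eq_mul]
    have h := hsplit (fun W => f W * f W - f W)
    rw [E2, hsT1, hsTb, hsTc] at h
    exact h.symm
  have hsubb : (q + 2) * (q + 2) - (q + 2) = q * q + 3 * q + 2 :=
    Nat.sub_eq_of_eq_add (by ring)
  have hsubc : (2 * q + 1) * (2 * q + 1) - (2 * q + 1) = 4 * (q * q) + 2 * q :=
    Nat.sub_eq_of_eq_add (by ring)
  have h011 : (1 * 1 - 1 : ℕ) = 0 := rfl
  rw [hsubb, hsubc, h011, Nat.mul_zero, Nat.zero_add] at eq2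
  -- move to the integers
  have hkk : k ≤ k * k := by
    rcases Nat.eq_zero_or_pos k with h | h
    · simp [h]
    · exact Nat.le_mul_of_pos_left k h
  have zA : (t1 : ℤ) + (tb + tc) = (q : ℤ)^3 + (q : ℤ)^2 + q + 1 := by exact_mod_cast eq0
  have zB : (t1 : ℤ) * 1 + ((tb : ℤ) * (q + 2) + (tc : ℤ) * (2 * q + 1))
      = (k : ℤ) * ((q : ℤ)^2 + q + 1) := by exact_mod_cast eq1
  have zC : (tb : ℤ) * ((q : ℤ) * q + 3 * q + 2) + (tc : ℤ) * (4 * ((q : ℤ) * q) + 2 * q)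
      = ((k : ℤ) * k - k) * (q + 1) := by
    zify [hkk] at eq2
    exact_mod_cast eq2
  -- first conclusion : (q+1) ∣ k
  have h2tc : ((q : ℤ) + 1) ∣ 2 * (tc : ℤ) :=
    ⟨(k : ℤ) * k - k - (q + 2) * tb - (4 * q - 2) * tc, by linear_combination zC⟩
  have hk2 : ((q : ℤ) + 1) ∣ (k : ℤ) + 2 * tc :=
    ⟨(tb : ℤ) + 2 * tc - k * q + q^2 + 1, by linear_combination zA - zB⟩
  have hzk : ((q : ℤ) + 1) ∣ (k : ℤ) := by
    have h := dvd_sub hk2 h2tc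
    have he : (k : ℤ) = (k : ℤ) + 2 * tc - 2 * tc := by ring
    rw [he]
    exact h
  constructor
  · rw [hncard]
    have : ((q + 1 : ℕ) : ℤ) ∣ ((k : ℕ) : ℤ) := by push_cast; exact hzk
    exact_mod_cast this
  · rw [hncard]
    -- q is a prime power
    obtain ⟨p, -, n, hp, hcard⟩ := FiniteField.card' (K := F)
    have hqpn : (q : ℤ) = (p : ℤ) ^ (n : ℕ) := by
      rw [hqdef, hcard]; push_cast; ring
    have D1 : (q : ℤ) ∣ ((k : ℤ) - 1) - tb :=
      ⟨(tb : ℤ) + 2 * tc + q^2 + q + 1 - k * (q + 1), by linear_combination zA - zB⟩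
    have D2 : (q : ℤ) ∣ ((k : ℤ) * k - k) - 2 * tb :=
      ⟨(q + 3) * (tb : ℤ) + (4 * q + 2) * tc - ((k : ℤ) * k - k), by linear_combination -zC⟩
    have hd : (q : ℤ) ∣ ((k : ℤ) - 1) * ((k : ℤ) - 2) := by
      have heq : ((k : ℤ) - 1) * ((k : ℤ) - 2)
          = (((k : ℤ) * k - k) - 2 * tb) - 2 * (((k : ℤ) - 1) - tb) := by ring
      rw [heq]
      exact dvd_sub D2 (D1.mul_left 2)
    rw [hqpn] at hd
    have hpz : Prime ((p : ℤ)) := Nat.prime_iff_prime_int.mp hp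
    by_cases hdvd : (p : ℤ) ∣ (k : ℤ) - 1
    · left
      rw [hqpn]
      have hnot : ¬ (p : ℤ) ∣ (k : ℤ) - 2 := by
        intro h
        have h1 : (p : ℤ) ∣ 1 := by
          have := dvd_sub hdvd h
          simpa using this
        exact hpz.not_dvd_one h1
      have hcop : IsCoprime ((p : ℤ) ^ (n : ℕ)) ((k : ℤ) - 2) :=
        ((hpz.coprime_iff_not_dvd).mpr hnot).pow_left
      exact hcop.dvd_of_dvd_mul_right hd
    · right
      rw [hqpn]
      have hcop : IsCoprime ((p : ℤ) ^ (n : ℕ)) ((k : ℤ) - 1) :=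
        ((hpz.coprime_iff_not_dvd).mpr hdvd).pow_left
      exact hcop.dvd_of_dvd_mul_left hd
end
end

section
/- In PG(n,q), with n ≥ 4 and q a square prime power, let K be an (n−1)-blocking set of type (a,b,c)_{n-1} with a = θ_{n-2}, b = θ_{n-3} + (√q)^{2n−3} and c = θ_{n-2} + (√q)^{2n−3}, and suppose k = θ_{n-2} + (√q)^{2n−1}. Let π be a hyperplane with |K ∩ π| = a and let α = K ∩ π (which is an (n−2)-dimensional subspace). Then among the q+1 hyperplanes of PG(n,q) containing α, exactly one (namely π) meets K in a points, none meets K in b points, and exactly q meet K in c points. -/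
open Module Set

noncomputable section

variable (F : Type) [Field F]

/-- `K` blocks every `t`-dimensional projective subspace of `PG(n,q)`,
i.e. `K` is an `(n-t)`-blocking set. -/
def BlocksDim (n t : ℕ) (K : Set (PGPoint F n)) : Prop :=
  ∀ W : Submodule F (Fin (n + 1) → F), finrank F W = t + 1 → (K ∩ projSet F n W).Nonempty


section Helpers

open Projectivization

variable {F}

lemma theta_mul (q m : ℕ) : theta q m * (q - 1) = q ^ (m + 1) - 1 := by
  have h : (q - 1) ∣ q ^ (m + 1) - 1 := by
    simpa using Nat.sub_dvd_pow_sub_pow q 1 (m + 1)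
  rw [theta, Nat.div_mul_cancel h]

lemma theta_succ {q : ℕ} (hq : 2 ≤ q) (m : ℕ) :
    theta q (m + 1) = theta q m + q ^ (m + 1) := by
  have hc : 0 < q - 1 := by omega
  apply Nat.eq_of_mul_eq_mul_right hc
  rw [theta_mul, add_mul, theta_mul]
  have h3 : q ^ (m + 1) * (q - 1) = q ^ (m + 1 + 1) - q ^ (m + 1) := by
    rw [Nat.mul_sub, mul_one, ← pow_succ]
  have h1 : 1 ≤ q ^ (m + 1) := Nat.one_le_pow _ _ (by omega)
  have h2 : q ^ (m + 1) ≤ q ^ (m + 1 + 1) := Nat.pow_le_pow_right (by omega) (by omega)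
  omega

lemma theta_pos {q : ℕ} (hq : 2 ≤ q) (m : ℕ) : 0 < theta q m := by
  have h := theta_mul q m
  have h1 : 1 ≤ q ^ (m + 1) := Nat.one_le_pow _ _ (by omega)
  have h2 : q ≤ q ^ (m + 1) := by
    conv_lhs => rw [← pow_one q]
    exact Nat.pow_le_pow_right (by omega) (by omega)
  rcases Nat.eq_zero_or_pos (theta q m) with h0 | h0
  · rw [h0, zero_mul] at h; omega
  · exact h0

variable [Fintype F]

lemma card_proj_mul (V : Type) [AddCommGroup V] [Module F V] [Fintype V] :
    Nat.card (Projectivization F V) * (Fintype.card F - 1) = Fintype.card V - 1 := by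
  classical
  set f : {v : V // v ≠ 0} → Projectivization F V := fun v => Projectivization.mk F v.1 v.2 with hf
  have key : ∀ x : Projectivization F V,
      Nat.card {v : {v : V // v ≠ 0} // f v = x} = Fintype.card F - 1 := by
    intro x
    have e : {c : F // c ≠ 0} ≃ {v : {v : V // v ≠ 0} // f v = x} := by
      refine Equiv.ofBijective
        (fun c => ⟨⟨c.1 • x.rep, smul_ne_zero c.2 x.rep_nonzero⟩, ?_⟩) ⟨?_, ?_⟩
      · show Projectivization.mk F (c.1 • x.rep) _ = x
        conv_rhs => rw [← x.mk_rep]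
        rw [Projectivization.mk_eq_mk_iff']
        exact ⟨c.1, rfl⟩
      · intro c c' h
        have h' : c.1 • x.rep = c'.1 • x.rep := by
          simpa [Subtype.ext_iff] using h
        exact Subtype.ext (smul_left_injective F x.rep_nonzero h')
      · rintro ⟨⟨v, hv⟩, hx⟩
        have hx' : Projectivization.mk F v hv = x := hx
        rw [← x.mk_rep, Projectivization.mk_eq_mk_iff'] at hx'
        obtain ⟨a, ha⟩ := hx'
        have ha0 : a ≠ 0 := by rintro rfl; rw [zero_smul] at ha; exact hv ha.symm
        exact ⟨⟨a, ha0⟩, Subtype.ext (Subtype.ext ha)⟩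
    rw [← Nat.card_congr e, ← Nat.card_congr (unitsEquivNeZero (G₀ := F)),
      Nat.card_eq_fintype_card, Fintype.card_units]
  haveI : Finite (Projectivization F V) := Quotient.finite _
  haveI : Fintype (Projectivization F V) := Fintype.ofFinite _
  have e := Equiv.sigmaFiberEquiv f
  have h1 : Fintype.card {v : V // v ≠ 0} = ∑ x : Projectivization F V, Nat.card {v // f v = x} := by
    rw [← Fintype.card_congr e, Fintype.card_sigma]
    congr 1; ext x; rw [Nat.card_eq_fintype_card]
  have h2 : Fintype.card {v : V // v ≠ 0} = Fintype.card V - 1 := by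
    have := Fintype.card_subtype_compl (fun v : V => v = 0)
    simpa [Fintype.card_subtype_eq] using this
  rw [← h2, h1]
  rw [Finset.sum_congr rfl (fun x _ => key x), Finset.sum_const, Finset.card_univ,
    smul_eq_mul, Nat.card_eq_fintype_card]

lemma mk_mem_projSet_iff {n : ℕ} (W : Submodule F (Fin (n + 1) → F))
    (v : Fin (n + 1) → F) (hv : v ≠ 0) :
    Projectivization.mk F v hv ∈ projSet F n W ↔ v ∈ W := by
  rw [projSet, Set.mem_setOf_eq, Projectivization.submodule_mk,
    Submodule.span_singleton_le_iff_mem]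

lemma ncard_projSet_mul {n : ℕ} (W : Submodule F (Fin (n + 1) → F)) :
    (projSet F n W).ncard * (Fintype.card F - 1) =
      Fintype.card F ^ (finrank F W) - 1 := by
  classical
  haveI : Fintype ↥W := Fintype.ofFinite _
  have hrange : Set.range (Projectivization.map W.subtype (Submodule.injective_subtype W))
      = projSet F n W := by
    ext x
    constructor
    · rintro ⟨y, rfl⟩
      induction y using Projectivization.ind with
      | h v hv =>
        rw [Projectivization.map_mk]
        exact (mk_mem_projSet_iff W v.1 _).mpr v.2
    · intro hx
      have hrep : x.rep ∈ W := hx (by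
        rw [Projectivization.submodule_eq]; exact Submodule.mem_span_singleton_self _)
      refine ⟨Projectivization.mk F (⟨x.rep, hrep⟩ : W)
        (by simpa [Subtype.ext_iff] using x.rep_nonzero), ?_⟩
      rw [Projectivization.map_mk]
      exact x.mk_rep
    
  have hinj : Function.Injective
      (Projectivization.map W.subtype (Submodule.injective_subtype W)) :=
    Projectivization.map_injective W.subtype (Submodule.injective_subtype W)
  have hcard : (projSet F n W).ncard = Nat.card (Projectivization F ↥W) := by
    rw [← hrange, ← Nat.card_coe_set_eq, Nat.card_range_of_injective hinj]
  rw [hcard, card_proj_mul ↥W, card_eq_pow_finrank (K := F) (V := ↥W)]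

lemma ncard_projSet_theta {n : ℕ} (W : Submodule F (Fin (n + 1) → F)) (d : ℕ)
    (hd : finrank F W = d + 1) :
    (projSet F n W).ncard = theta (Fintype.card F) d := by
  have hq : 2 ≤ Fintype.card F := Fintype.one_lt_card
  apply Nat.eq_of_mul_eq_mul_right (show 0 < Fintype.card F - 1 by omega)
  rw [ncard_projSet_mul, theta_mul, hd]

end Helpers

section RankHelpers

variable {F}
variable {V : Type} [AddCommGroup V] [Module F V] [FiniteDimensional F V]

lemma rank_one_le {U T : Submodule F V} (hU : finrank F U = 1) (hT : T ≤ U) :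
    T = ⊥ ∨ T = U := by
  have hle : finrank F T ≤ finrank F U := Submodule.finrank_mono hT
  rcases Nat.eq_zero_or_pos (finrank F T) with h0 | h0
  · exact Or.inl (Submodule.finrank_eq_zero.mp h0)
  · exact Or.inr (Submodule.eq_of_le_of_finrank_le hT (by omega))

lemma finrank_sup_point {x y : Projectivization F V} (h : x ≠ y) :
    finrank F ↥(x.submodule ⊔ y.submodule) = 2 := by
  have h1 := x.finrank_submodule
  have h2 := y.finrank_submodule
  have hinf : x.submodule ⊓ y.submodule = ⊥ := by
    rcases rank_one_le h1 inf_le_left with h' | h'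
    · exact h'
    · rcases rank_one_le h2 inf_le_right with h'' | h''
      · exact h''
      · exact absurd (Projectivization.submodule_injective (h'.symm.trans h'')) h
  have hs := Submodule.finrank_sup_add_finrank_inf_eq x.submodule y.submodule
  rw [hinf, finrank_bot] at hs
  omega

lemma exists_compl_le {U X : Submodule F V} (hUX : U ≤ X) :
    ∃ H, H ≤ X ∧ U ⊓ H = ⊥ ∧ finrank F U + finrank F H = finrank F X := by
  obtain ⟨H', hH'⟩ := Submodule.exists_isCompl (U.comap X.subtype)
  have hU : (U.comap X.subtype).map X.subtype = U := by
    rw [Submodule.map_comap_subtype, inf_eq_right.mpr hUX]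
  refine ⟨H'.map X.subtype, Submodule.map_subtype_le X H', ?_, ?_⟩
  · rw [← hU, ← Submodule.map_inf _ (Submodule.injective_subtype X),
      hH'.disjoint.eq_bot, Submodule.map_bot]
  · rw [Submodule.finrank_map_subtype_eq]
    have h1 : finrank F (U.comap X.subtype) = finrank F U := by
      conv_rhs => rw [← hU]
      rw [Submodule.finrank_map_subtype_eq]
    rw [← h1, Submodule.finrank_add_eq_of_isCompl hH']

lemma sup_eq_of_le {A W : Submodule F V} {x : Projectivization F V}
    (hA : finrank F A + 1 = finrank F W) (hAW : A ≤ W) (hx : x.submodule ≤ W)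
    (hxA : ¬ x.submodule ≤ A) : A ⊔ x.submodule = W := by
  have hinf : A ⊓ x.submodule = ⊥ := by
    rcases rank_one_le x.finrank_submodule inf_le_right with h | h
    · exact h
    · exact absurd (h ▸ inf_le_left) hxA
  have hs := Submodule.finrank_sup_add_finrank_inf_eq A x.submodule
  rw [hinf, finrank_bot, x.finrank_submodule] at hs
  exact (Submodule.eq_of_le_of_finrank_le (sup_le hAW hx) (by omega)).symm ▸ rfl

lemma finrank_sup_of_not_le {A : Submodule F V} {x : Projectivization F V}
    (hxA : ¬ x.submodule ≤ A) :
    finrank F ↥(A ⊔ x.submodule) = finrank F A + 1 := by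
  have hinf : A ⊓ x.submodule = ⊥ := by
    rcases rank_one_le x.finrank_submodule inf_le_right with h | h
    · exact h
    · exact absurd (h ▸ inf_le_left) hxA
  have hs := Submodule.finrank_sup_add_finrank_inf_eq A x.submodule
  rw [hinf, finrank_bot, x.finrank_submodule] at hs
  omega

end RankHelpers

section CountHelpers

variable {F} [Fintype F]

lemma projSet_subset_iff {n : ℕ} (A W : Submodule F (Fin (n + 1) → F)) :
    projSet F n A ⊆ projSet F n W ↔ A ≤ W := by
  constructor
  · intro h v hv
    by_cases h0 : v = 0
    · simp [h0]
    · exact (mk_mem_projSet_iff W v h0).mp (h ((mk_mem_projSet_iff A v h0).mpr hv))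
  · intro h x hx
    exact le_trans hx h

lemma card_hyperplanes_s16 {n : ℕ} (A : Submodule F (Fin (n + 1) → F))
    (hA : finrank F A + 2 = n + 1) :
    {W : Submodule F (Fin (n + 1) → F) | finrank F W = finrank F A + 1 ∧ A ≤ W}.ncard
      = Fintype.card F + 1 := by
  classical
  have hV : finrank F (Fin (n + 1) → F) = n + 1 := Module.finrank_fin_fun F
  obtain ⟨C, hC⟩ := Submodule.exists_isCompl A
  have hCrank : finrank F C = 2 := by
    have := Submodule.finrank_add_eq_of_isCompl hC
    rw [hV] at this; omega
  set r := finrank F A with hr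
  have e1 : {W : Submodule F (Fin (n + 1) → F) // finrank F W = r + 1 ∧ A ≤ W} ≃
      {U : Submodule F (Fin (n + 1) → F) // U ≤ C ∧ finrank F U = 1} := by
    refine
      { toFun := fun W => ⟨W.1 ⊓ C, inf_le_right, ?_⟩
        invFun := fun U => ⟨A ⊔ U.1, ?_, le_sup_left⟩
        left_inv := ?_, right_inv := ?_ }
    · have hsup : W.1 ⊔ C = ⊤ := by
        rw [eq_top_iff, ← hC.codisjoint.eq_top]
        exact sup_le_sup_right W.2.2 C
      have hs := Submodule.finrank_sup_add_finrank_inf_eq W.1 C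
      rw [hsup, finrank_top, hV, W.2.1, hCrank] at hs
      omega
    · have hinf : A ⊓ U.1 = ⊥ := by
        rw [eq_bot_iff, ← hC.disjoint.eq_bot]
        exact inf_le_inf_left A U.2.1
      have hs := Submodule.finrank_sup_add_finrank_inf_eq A U.1
      rw [hinf, finrank_bot, U.2.2] at hs
      omega
    · rintro ⟨W, hW1, hW2⟩
      apply Subtype.ext
      show A ⊔ (W ⊓ C) = W
      rw [inf_comm, ← sup_inf_assoc_of_le C hW2, hC.codisjoint.eq_top, top_inf_eq]
    · rintro ⟨U, hU1, hU2⟩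
      apply Subtype.ext
      show (A ⊔ U) ⊓ C = U
      rw [sup_comm, sup_inf_assoc_of_le A hU1, hC.disjoint.eq_bot, sup_bot_eq]
  have e2 : {U : Submodule F (Fin (n + 1) → F) // U ≤ C ∧ finrank F U = 1} ≃
      {U' : Submodule F ↥C // finrank F U' = 1} := by
    refine
      { toFun := fun U => ⟨U.1.comap C.subtype, ?_⟩
        invFun := fun U' => ⟨U'.1.map C.subtype, Submodule.map_subtype_le C U'.1, ?_⟩
        left_inv := ?_, right_inv := ?_ }
    · have hmap : (U.1.comap C.subtype).map C.subtype = U.1 := by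
        rw [Submodule.map_comap_subtype, inf_eq_right.mpr U.2.1]
      have hfr := Submodule.finrank_map_subtype_eq C (U.1.comap C.subtype)
      rw [hmap] at hfr
      rw [← hfr]; exact U.2.2
    · rw [Submodule.finrank_map_subtype_eq]; exact U'.2
    · rintro ⟨U, hU1, hU2⟩
      apply Subtype.ext
      show (U.comap C.subtype).map C.subtype = U
      rw [Submodule.map_comap_subtype, inf_eq_right.mpr hU1]
    · rintro ⟨U', hU'⟩
      apply Subtype.ext
      show (U'.map C.subtype).comap C.subtype = U'
      rw [Submodule.comap_map_eq, Submodule.ker_subtype, sup_bot_eq]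
  have e3 : Projectivization F ↥C ≃ {U' : Submodule F ↥C // finrank F U' = 1} :=
    Projectivization.equivSubmodule F ↥C
  haveI : Fintype ↥C := Fintype.ofFinite _
  have hcard : Nat.card (Projectivization F ↥C) = Fintype.card F + 1 := by
    have h := card_proj_mul (F := F) ↥C
    rw [card_eq_pow_finrank (K := F) (V := ↥C), hCrank] at h
    have hq : 2 ≤ Fintype.card F := Fintype.one_lt_card
    set q := Fintype.card F
    have hexp : (q + 1) * (q - 1) = q ^ 2 - 1 := by
      have : (q + 1) * q = q ^ 2 + q := by ring
      have h2 : (q + 1) * (q - 1) = (q + 1) * q - (q + 1) := by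
        rw [Nat.mul_sub, mul_one]
      omega
    apply Nat.eq_of_mul_eq_mul_right (show 0 < Fintype.card F - 1 by omega)
    rw [h, hexp]
  rw [← Nat.card_coe_set_eq]
  have : Nat.card {W : Submodule F (Fin (n + 1) → F) | finrank F W = r + 1 ∧ A ≤ W}
      = Nat.card (Projectivization F ↥C) :=
    Nat.card_congr ((Equiv.subtypeEquivRight (fun W => Iff.rfl)).trans
      ((e1.trans e2).trans e3.symm))
  rw [this, hcard]

end CountHelpers


section LineClosure

variable {F}

lemma mk_mem_of_smul {n : ℕ} {S : Set (PGPoint F n)} {v u : Fin (n + 1) → F}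
    (hv : v ≠ 0) (hu : u ≠ 0) (c : F) (hc : c • v = u)
    (hmem : Projectivization.mk F v hv ∈ S) : Projectivization.mk F u hu ∈ S := by
  have h : Projectivization.mk F u hu = Projectivization.mk F v hv :=
    (Projectivization.mk_eq_mk_iff' F u v hu hv).mpr ⟨c, hc⟩
  rwa [h]

/-- The linear subspace underlying a line-closed set of projective points. -/
def lineClosure {n : ℕ} (S : Set (PGPoint F n))
    (hclosed : ∀ x ∈ S, ∀ y ∈ S, x ≠ y → ∀ z : PGPoint F n,
      z.submodule ≤ x.submodule ⊔ y.submodule → z ∈ S) :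
    Submodule F (Fin (n + 1) → F) where
  carrier := {v | ∀ hv : v ≠ 0, Projectivization.mk F v hv ∈ S}
  zero_mem' := fun hv => absurd rfl hv
  add_mem' := by
    intro v w hv hw hvw
    by_cases hv0 : v = 0
    · have hw0 : w ≠ 0 := by intro h; exact hvw (by rw [hv0, h, add_zero])
      exact mk_mem_of_smul hw0 hvw 1 (by rw [one_smul, hv0, zero_add]) (hw hw0)
    · by_cases hw0 : w = 0
      · exact mk_mem_of_smul hv0 hvw 1 (by rw [one_smul, hw0, add_zero]) (hv hv0)
      · by_cases heq : Projectivization.mk F v hv0 = Projectivization.mk F w hw0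
        · obtain ⟨cc, hcc⟩ := (Projectivization.mk_eq_mk_iff' F v w hv0 hw0).mp heq
          exact mk_mem_of_smul hw0 hvw (cc + 1)
            (by rw [add_smul, one_smul, hcc]) (hw hw0)
        · apply hclosed _ (hv hv0) _ (hw hw0) heq (Projectivization.mk F (v + w) hvw)
          rw [Projectivization.submodule_mk, Projectivization.submodule_mk,
            Projectivization.submodule_mk, Submodule.span_singleton_le_iff_mem]
          exact Submodule.add_mem_sup (Submodule.mem_span_singleton_self v)
            (Submodule.mem_span_singleton_self w)
  smul_mem' := by
    intro c v hv hcv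
    have hv0 : v ≠ 0 := by intro h; exact hcv (by rw [h, smul_zero])
    exact mk_mem_of_smul hv0 hcv c rfl (hv hv0)

lemma mem_lineClosure {n : ℕ} (S : Set (PGPoint F n)) (hclosed) (v : Fin (n + 1) → F) :
    v ∈ lineClosure S hclosed ↔ ∀ hv : v ≠ 0, Projectivization.mk F v hv ∈ S :=
  Iff.rfl

end LineClosure

set_option maxHeartbeats 2000000 in
/-- In the situation of the unital-cone theorem with
`k = θ_{n-2} + √q^{2n-1}`, if `π` is a hyperplane with `|K ∩ π| = a` then
`α = K ∩ π` is an `(n-2)`-dimensional subspace, and among the `q+1` hyperplanes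
through `α` exactly one (namely `π`) meets `K` in `a` points, none meets `K` in `b`
points, and exactly `q` meet `K` in `c` points. -/
theorem statement16 [Fintype F] (p e q sq n : ℕ) (hp : p.Prime) (he : 0 < e)
    (hqdef : q = p ^ (2 * e)) (hsq : sq = p ^ e) (hq : Fintype.card F = q)
    (hn : 4 ≤ n)
    (K : Set (PGPoint F n)) (hblock : BlocksDim F n 1 K)
    (hK : IsType3 F n K (theta q (n - 2)) (theta q (n - 3) + sq ^ (2 * n - 3))
      (theta q (n - 2) + sq ^ (2 * n - 3)))
    (hk : K.ncard = theta q (n - 2) + sq ^ (2 * n - 1))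
    (Wπ : Submodule F (Fin (n + 1) → F)) (hWπ : finrank F Wπ = n)
    (hπa : (K ∩ projSet F n Wπ).ncard = theta q (n - 2)) :
    (∃ Wα : Submodule F (Fin (n + 1) → F),
      finrank F Wα = n - 1 ∧ K ∩ projSet F n Wπ = projSet F n Wα) ∧
    {W : Submodule F (Fin (n + 1) → F) | finrank F W = n ∧
      K ∩ projSet F n Wπ ⊆ projSet F n W}.ncard = q + 1 ∧
    {W : Submodule F (Fin (n + 1) → F) | finrank F W = n ∧
      K ∩ projSet F n Wπ ⊆ projSet F n W ∧
      (K ∩ projSet F n W).ncard = theta q (n - 2)} = {Wπ} ∧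
    {W : Submodule F (Fin (n + 1) → F) | finrank F W = n ∧
      K ∩ projSet F n Wπ ⊆ projSet F n W ∧
      (K ∩ projSet F n W).ncard = theta q (n - 3) + sq ^ (2 * n - 3)}.ncard = 0 ∧
    {W : Submodule F (Fin (n + 1) → F) | finrank F W = n ∧
      K ∩ projSet F n Wπ ⊆ projSet F n W ∧
      (K ∩ projSet F n W).ncard = theta q (n - 2) + sq ^ (2 * n - 3)}.ncard = q := by
  classical
  haveI : Finite (PGPoint F n) := Quotient.finite _
  haveI : Finite (Submodule F (Fin (n + 1) → F)) :=
    Finite.of_injective _ (SetLike.coe_injective (A := Submodule F (Fin (n + 1) → F)))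
  have hq2 : 2 ≤ q := by rw [← hq]; exact Fintype.one_lt_card
  have hp2 : 2 ≤ p := hp.two_le
  have hsq2 : 2 ≤ sq := by
    rw [hsq]
    calc 2 ≤ p := hp2
    _ ≤ p ^ e := Nat.le_self_pow (by omega) p
  have hq' : q = sq ^ 2 := by rw [hqdef, hsq, ← pow_mul, Nat.mul_comm]
  set M := sq ^ (2 * n - 3) with hM
  have hqpow : q ^ (n - 2) = sq ^ (2 * n - 4) := by
    rw [hq', ← pow_mul]; congr 1; omega
  have hM1 : 1 ≤ M := Nat.one_le_pow _ _ (by omega)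
  have hMq : q ^ (n - 2) < M := by
    have h1 : M = sq ^ (2 * n - 4) * sq := by rw [hM, ← pow_succ]; congr 1; omega
    have h2 : 1 ≤ sq ^ (2 * n - 4) := Nat.one_le_pow _ _ (by omega)
    rw [hqpow, h1]
    nlinarith [h2, hsq2]
  have hab : theta q (n - 2) = theta q (n - 3) + q ^ (n - 2) := by
    have h := theta_succ hq2 (n - 3)
    have h2 : n - 3 + 1 = n - 2 := by omega
    rw [h2] at h; exact h
  have hk2 : sq ^ (2 * n - 1) = q * M := by
    rw [hq', hM, ← pow_add]; congr 1; omega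
  have hq3 : 1 ≤ q ^ (n - 2) := Nat.one_le_pow _ _ (by omega)
  have hVrank : finrank F (Fin (n + 1) → F) = n + 1 := Module.finrank_fin_fun F
  set S : Set (PGPoint F n) := K ∩ projSet F n Wπ with hS
  have hSsub : S ⊆ projSet F n Wπ := by rw [hS]; exact Set.inter_subset_right
  have hSK : S ⊆ K := by rw [hS]; exact Set.inter_subset_left
  -- Bose-Burton: S is closed under lines
  have hclosed : ∀ x ∈ S, ∀ y ∈ S, x ≠ y → ∀ z : PGPoint F n,
      z.submodule ≤ x.submodule ⊔ y.submodule → z ∈ S := by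
    intro x hx y hy hxy z hzle
    by_contra hz
    have hxW : x.submodule ≤ Wπ := hx.2
    have hyW : y.submodule ≤ Wπ := hy.2
    have hzW : z.submodule ≤ Wπ := le_trans hzle (sup_le hxW hyW)
    have hzK : z ∉ K := fun h => hz ⟨h, hzW⟩
    obtain ⟨H, hHW, hHz, hHrank⟩ := exists_compl_le hzW
    rw [z.finrank_submodule, hWπ] at hHrank
    have hwzne : ∀ w : ↥(projSet F n H), z ≠ w.1 := by
      intro w h
      have hle : z.submodule ≤ ⊥ := hHz ▸ le_inf le_rfl (h ▸ w.2)
      have h1 := z.finrank_submodule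
      rw [le_bot_iff.mp hle, finrank_bot] at h1
      omega
    have hpsi : ∀ w : ↥(projSet F n H), ∃ u, u ∈ S ∧
        u.submodule ≤ z.submodule ⊔ w.1.submodule := by
      intro w
      have hrank2 : finrank F ↥(z.submodule ⊔ w.1.submodule) = 2 :=
        finrank_sup_point (hwzne w)
      obtain ⟨u, hu⟩ := hblock (z.submodule ⊔ w.1.submodule) (by omega)
      exact ⟨u, ⟨hu.1, le_trans hu.2 (sup_le hzW (le_trans w.2 hHW))⟩, hu.2⟩
    choose ψ hψS hψle using hpsi
    have hkey : ∀ w : ↥(projSet F n H),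
        w.1.submodule = (z.submodule ⊔ w.1.submodule) ⊓ H := by
      intro w
      set D := (z.submodule ⊔ w.1.submodule) ⊓ H with hD
      have h5 : D ⊓ z.submodule = ⊥ := by
        rw [eq_bot_iff]
        calc D ⊓ z.submodule ≤ H ⊓ z.submodule := inf_le_inf_right _ inf_le_right
        _ = z.submodule ⊓ H := inf_comm _ _
        _ = ⊥ := hHz
      have h6 : finrank F ↥(D ⊔ z.submodule) ≤ 2 := by
        rw [← finrank_sup_point (hwzne w)]
        exact Submodule.finrank_mono (sup_le inf_le_left le_sup_left)
      have hs := Submodule.finrank_sup_add_finrank_inf_eq D z.submodule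
      rw [h5, finrank_bot, z.finrank_submodule] at hs
      exact Submodule.eq_of_le_of_finrank_le (le_inf le_sup_right w.2)
        (by rw [w.1.finrank_submodule]; omega)
    have hline : ∀ w : ↥(projSet F n H),
        z.submodule ⊔ (ψ w).submodule = z.submodule ⊔ w.1.submodule := by
      intro w
      have hψz : z ≠ ψ w := fun h => hzK (h ▸ hSK (hψS w))
      apply Submodule.eq_of_le_of_finrank_le (sup_le le_sup_left (hψle w))
      rw [finrank_sup_point (hwzne w), finrank_sup_point hψz]
    have hinj : Function.Injective ψ := by
      intro w1 w2 heq
      have h12 : z.submodule ⊔ w1.1.submodule = z.submodule ⊔ w2.1.submodule := by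
        rw [← hline w1, ← hline w2, heq]
      have h13 : w1.1.submodule = w2.1.submodule := by
        rw [hkey w1, hkey w2, h12]
      exact Subtype.ext (Projectivization.submodule_injective h13)
    have hnotboth : x ∉ Set.range ψ ∨ y ∉ Set.range ψ := by
      by_contra hcon
      push_neg at hcon
      obtain ⟨⟨w1, hw1⟩, ⟨w2, hw2⟩⟩ := hcon
      have hzx : z ≠ x := fun h => hzK (h ▸ hx.1)
      have hzy : z ≠ y := fun h => hzK (h ▸ hy.1)
      have hL : z.submodule ⊔ x.submodule = x.submodule ⊔ y.submodule := by
        apply Submodule.eq_of_le_of_finrank_le (sup_le hzle le_sup_left)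
        rw [finrank_sup_point hxy, finrank_sup_point hzx]
      have hL' : z.submodule ⊔ y.submodule = x.submodule ⊔ y.submodule := by
        apply Submodule.eq_of_le_of_finrank_le (sup_le hzle le_sup_right)
        rw [finrank_sup_point hxy, finrank_sup_point hzy]
      have e1 : z.submodule ⊔ w1.1.submodule = z.submodule ⊔ w2.1.submodule := by
        rw [← hline w1, ← hline w2, hw1, hw2, hL, hL']
      have h13 : w1.1.submodule = w2.1.submodule := by
        rw [hkey w1, hkey w2, e1]
      have : w1 = w2 := Subtype.ext (Projectivization.submodule_injective h13)
      apply hxy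
      rw [← hw1, ← hw2, this]
    obtain ⟨pt, hptS, hptr⟩ : ∃ pt ∈ S, pt ∉ Set.range ψ := by
      rcases hnotboth with h | h
      exacts [⟨x, hx, h⟩, ⟨y, hy, h⟩]
    have hmap2 : ∀ w : ↥(projSet F n H), ψ w ∈ S \ {pt} := by
      intro w
      refine ⟨hψS w, ?_⟩
      intro hmem
      rw [Set.mem_singleton_iff] at hmem
      exact hptr ⟨w, hmem⟩
    have hcard : Nat.card ↥(projSet F n H) ≤ Nat.card ↥(S \ {pt}) :=
      Nat.card_le_card_of_injective (fun w => ⟨ψ w, hmap2 w⟩)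
        (fun w1 w2 h => hinj (by simpa [Subtype.ext_iff] using h))
    have hH' : (projSet F n H).ncard = theta q (n - 2) := by
      have := ncard_projSet_theta H (n - 2) (by omega)
      rwa [hq] at this
    have hSd : (S \ {pt}).ncard = theta q (n - 2) - 1 := by
      rw [Set.ncard_diff_singleton_of_mem hptS, hπa]
    rw [Nat.card_coe_set_eq, Nat.card_coe_set_eq, hH', hSd] at hcard
    have := theta_pos hq2 (n - 2)
    omega
  -- the subspace spanned by S
  set U : Submodule F (Fin (n + 1) → F) := lineClosure S hclosed with hU
  have hUmem : ∀ v, v ∈ U ↔ ∀ hv : v ≠ 0, Projectivization.mk F v hv ∈ S :=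
    fun v => mem_lineClosure S hclosed v
  have hSU : S = projSet F n U := by
    ext x
    constructor
    · intro hxS
      show x.submodule ≤ U
      rw [Projectivization.submodule_eq, Submodule.span_singleton_le_iff_mem, hUmem]
      intro hv
      rwa [Projectivization.mk_rep]
    · intro hxU
      have hrep : x.rep ∈ U := hxU (by
        rw [Projectivization.submodule_eq]; exact Submodule.mem_span_singleton_self _)
      have h := (hUmem x.rep).mp hrep x.rep_nonzero
      rwa [Projectivization.mk_rep] at h
  have hprojUcard : (projSet F n U).ncard = theta q (n - 2) := by
    rw [← hSU]; exact hπa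
  have hUrank : finrank F U = n - 1 := by
    have h2 := ncard_projSet_mul (F := F) U
    rw [hq, hprojUcard, theta_mul] at h2
    rw [show n - 2 + 1 = n - 1 from by omega] at h2
    have e1 : 1 ≤ q ^ finrank F ↥U := Nat.one_le_pow _ _ (by omega)
    have e2 : 1 ≤ q ^ (n - 1) := Nat.one_le_pow _ _ (by omega)
    have h3 : q ^ finrank F ↥U = q ^ (n - 1) := by omega
    exact Nat.pow_right_injective hq2 h3
  have hTT : ∀ W : Submodule F (Fin (n + 1) → F), S ⊆ projSet F n W ↔ U ≤ W := by
    intro W; rw [hSU]; exact projSet_subset_iff U W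
  have hUWπ : U ≤ Wπ := (hTT Wπ).mp hSsub
  set T : Set (Submodule F (Fin (n + 1) → F)) := {W | finrank F W = n ∧ U ≤ W} with hT
  have hWπT : Wπ ∈ T := ⟨hWπ, hUWπ⟩
  have hTeq2 : T = {W : Submodule F (Fin (n + 1) → F) |
      finrank F W = finrank F U + 1 ∧ U ≤ W} := by
    ext W
    simp only [hT, Set.mem_setOf_eq, hUrank]
    constructor
    · rintro ⟨h1, h2⟩; exact ⟨by omega, h2⟩
    · rintro ⟨h1, h2⟩; exact ⟨by omega, h2⟩
  have hTcard : T.ncard = q + 1 := by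
    rw [hTeq2, card_hyperplanes_s16 U (by rw [hUrank]; omega), hq]
  have hsetEq : {W : Submodule F (Fin (n + 1) → F) |
      finrank F W = n ∧ S ⊆ projSet F n W} = T := by
    ext W
    simp only [hT, Set.mem_setOf_eq]
    exact and_congr_right fun _ => hTT W
  have hprojU_sub : projSet F n U ⊆ K := by rw [← hSU]; exact hSK
  have hfib : ∀ W ∈ T, ∀ x : PGPoint F n, x ∈ K \ projSet F n U →
      ((U ⊔ x.submodule = W) ↔ x ∈ projSet F n W) := by
    intro W hW x hx
    constructor
    · rintro rfl
      show x.submodule ≤ U ⊔ x.submodule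
      exact le_sup_right
    · intro hxW
      exact sup_eq_of_le (by rw [hUrank, hW.1]; omega) hW.2 hxW (fun h => hx.2 h)
  haveI : Fintype ↥T := Fintype.ofFinite _
  haveI : Fintype ↥(K \ projSet F n U) := Fintype.ofFinite _
  set g : ↥(K \ projSet F n U) → ↥T := fun x =>
    ⟨U ⊔ x.1.submodule,
     ⟨by rw [finrank_sup_of_not_le (fun h => x.2.2 h), hUrank]; omega, le_sup_left⟩⟩
    with hg
  have hsum1 : Nat.card ↥(K \ projSet F n U)
      = ∑ t : ↥T, Nat.card {x : ↥(K \ projSet F n U) // g x = t} := by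
    rw [← Nat.card_congr (Equiv.sigmaFiberEquiv g), Nat.card_eq_fintype_card,
      Fintype.card_sigma]
    congr 1; ext t; rw [Nat.card_eq_fintype_card]
  have hfibcard : ∀ t : ↥T, Nat.card {x : ↥(K \ projSet F n U) // g x = t}
      = (K ∩ projSet F n t.1).ncard - theta q (n - 2) := by
    intro t
    have e : {x : ↥(K \ projSet F n U) // g x = t}
        ≃ ↥((K ∩ projSet F n t.1) \ projSet F n U) := by
      refine Equiv.ofBijective (fun x => ⟨x.1.1, ⟨⟨x.1.2.1, ?_⟩, x.1.2.2⟩⟩) ⟨?_, ?_⟩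
      · have h' : U ⊔ x.1.1.submodule = t.1 := congrArg Subtype.val x.2
        exact (hfib t.1 t.2 x.1.1 x.1.2).mp h'
      · intro x1 x2 h
        rw [Subtype.ext_iff] at h
        exact Subtype.ext (Subtype.ext h)
      · rintro ⟨y, ⟨⟨hyK, hyt⟩, hyU⟩⟩
        refine ⟨⟨⟨y, ⟨hyK, hyU⟩⟩, ?_⟩, rfl⟩
        apply Subtype.ext
        exact (hfib t.1 t.2 y ⟨hyK, hyU⟩).mpr hyt
    rw [Nat.card_congr e, Nat.card_coe_set_eq,
      Set.ncard_diff (Set.subset_inter hprojU_sub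
        ((projSet_subset_iff U t.1).mpr t.2.2)) (Set.toFinite _), hprojUcard]
  have hKdiff : Nat.card ↥(K \ projSet F n U) = K.ncard - theta q (n - 2) := by
    rw [Nat.card_coe_set_eq, Set.ncard_diff hprojU_sub (Set.toFinite _), hprojUcard]
  set f : ↥T → ℕ := fun t => (K ∩ projSet F n t.1).ncard - theta q (n - 2) with hf
  have hsumf : ∑ t : ↥T, f t = q * M := by
    have h1 : ∑ t : ↥T, f t = Nat.card ↥(K \ projSet F n U) := by
      rw [hsum1]
      exact Finset.sum_congr rfl fun t _ => (hfibcard t).symm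
    rw [h1, hKdiff, hk, hk2]
    omega
  set tπ : ↥T := ⟨Wπ, hWπT⟩ with htπ
  have hftπ : f tπ = 0 := by
    have : (K ∩ projSet F n Wπ).ncard = theta q (n - 2) := by rw [← hS]; exact hπa
    simp only [hf, htπ, this]
    omega
  have hfle : ∀ t : ↥T, f t ≤ M := by
    intro t
    rcases hK.1 t.1 t.2.1 with h | h | h
    · simp only [hf, h]; omega
    · simp only [hf, h, hab]; omega
    · simp only [hf, h]; omega
  have hcardT : Fintype.card ↥T = q + 1 := by
    rw [← Nat.card_eq_fintype_card, Nat.card_coe_set_eq, hTcard]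
  have hall : ∀ t : ↥T, t ≠ tπ → f t = M := by
    by_contra hcon
    push_neg at hcon
    obtain ⟨t0, ht0, hlt⟩ := hcon
    have hlt' : f t0 < M := lt_of_le_of_ne (hfle t0) hlt
    have hstrict : ∑ t ∈ Finset.univ.erase tπ, f t
        < ∑ t ∈ Finset.univ.erase tπ, M :=
      Finset.sum_lt_sum (fun i _ => hfle i)
        ⟨t0, Finset.mem_erase.mpr ⟨ht0, Finset.mem_univ _⟩, hlt'⟩
    have hsplit : f tπ + ∑ t ∈ Finset.univ.erase tπ, f t = ∑ t : ↥T, f t :=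
      Finset.add_sum_erase _ f (Finset.mem_univ _)
    rw [Finset.sum_const, Finset.card_erase_of_mem (Finset.mem_univ _),
      Finset.card_univ, hcardT, smul_eq_mul] at hstrict
    rw [hftπ, zero_add, hsumf] at hsplit
    rw [hsplit] at hstrict
    have h9 : q + 1 - 1 = q := by omega
    rw [h9] at hstrict
    exact lt_irrefl _ hstrict
  have hc_of_ne : ∀ W, W ∈ T → W ≠ Wπ →
      (K ∩ projSet F n W).ncard = theta q (n - 2) + M := by
    intro W hWT hne
    have h1 : f ⟨W, hWT⟩ = M :=
      hall _ (fun h => hne (congrArg Subtype.val h))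
    simp only [hf] at h1
    rcases hK.1 W hWT.1 with h | h | h
    · rw [h] at h1; omega
    · rw [h, hab] at h1; omega
    · exact h
  refine ⟨⟨U, hUrank, hSU⟩, ?_, ?_, ?_, ?_⟩
  · rw [hsetEq, hTcard]
  · ext W
    simp only [Set.mem_setOf_eq, Set.mem_singleton_iff]
    constructor
    · rintro ⟨h1, h2, h3⟩
      by_contra hne
      have hWT : W ∈ T := ⟨h1, (hTT W).mp h2⟩
      rw [hc_of_ne W hWT hne] at h3
      omega
    · rintro rfl
      exact ⟨hWπ, hSsub, hπa⟩
  · have hempty : {W : Submodule F (Fin (n + 1) → F) | finrank F W = n ∧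
        S ⊆ projSet F n W ∧ (K ∩ projSet F n W).ncard = theta q (n - 3) + M} = ∅ := by
      ext W
      simp only [Set.mem_setOf_eq, Set.mem_empty_iff_false, iff_false]
      rintro ⟨h1, h2, h3⟩
      have hWT : W ∈ T := ⟨h1, (hTT W).mp h2⟩
      by_cases hne : W = Wπ
      · subst hne
        rw [← hS, hπa] at h3
        omega
      · rw [hc_of_ne W hWT hne] at h3
        omega
    rw [hempty, Set.ncard_empty]
  · have heq : {W : Submodule F (Fin (n + 1) → F) | finrank F W = n ∧
        S ⊆ projSet F n W ∧ (K ∩ projSet F n W).ncard = theta q (n - 2) + M}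
        = T \ {Wπ} := by
      ext W
      simp only [Set.mem_setOf_eq, Set.mem_diff, Set.mem_singleton_iff]
      constructor
      · rintro ⟨h1, h2, h3⟩
        refine ⟨⟨h1, (hTT W).mp h2⟩, ?_⟩
        rintro rfl
        rw [← hS, hπa] at h3
        omega
      · rintro ⟨hWT, hne⟩
        exact ⟨hWT.1, (hTT W).mpr hWT.2, hc_of_ne W hWT hne⟩
    rw [heq, Set.ncard_diff_singleton_of_mem hWπT, hTcard]
    omega
end
end
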